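/- Let m ≥ 1 and let G be a bipartite graph of maximum degree at most 3 that contains no induced cycle C_k for 3 ≤ k ≤ 3m+3 and no induced subgraph H_j for 1 ≤ j ≤ 3m+3, where H_j is the graph consisting of a path on j vertices with one additional pendant vertex attached at each endpoint on both sides (the 'H'-shaped graph with a j-vertex horizontal path and two pendant edges at each end). Then χ(G*) ≤ ((m+1)/m)·ω(G*). -/

import Mathlib

open scoped Classical

noncomputable section

/-! ## Simplicial complexes and Castelnuovo–Mumford regularity -/

/-- A (abstract) simplicial complex on the vertex type `V`, given as a
downward closed family of finsets. -/
def IsComplex {V : Type} (Δ : Finset V → Prop) : Prop :=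
  ∀ ⦃F G : Finset V⦄, Δ F → G ⊆ F → Δ G

/-- The faces of cardinality `n` of a family `Δ` (faces of card `n` are the
`(n-1)`-dimensional simplices). -/
def Faces {V : Type} (Δ : Finset V → Prop) (n : ℕ) : Type :=
  {F : Finset V // Δ F ∧ F.card = n}

/-- The simplicial boundary map of the (augmented) chain complex of `Δ` over
a field `k`, from chains on faces of card `n+1` to chains on faces of card `n`,
with signs determined by a linear order on the vertices. -/
def cxBoundary {V : Type} (k : Type) [Field k] [LinearOrder V]
    (Δ : Finset V → Prop) (n : ℕ) :
    (Faces Δ (n + 1) →₀ k) →ₗ[k] (Faces Δ n →₀ k) :=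
  Finsupp.lsum k fun F => LinearMap.toSpanSingleton k _
    (∑ x ∈ F.1.attach,
      ((-1 : k) ^ (F.1.filter (fun z => z < x.1)).card) •
        (if h : Δ (F.1.erase x.1) ∧ (F.1.erase x.1).card = n then
          Finsupp.single (⟨F.1.erase x.1, h⟩ : Faces Δ n) (1 : k) else 0))

/-- Cycles in chain degree `j` (faces of card `j`); in the bottom degree every
chain is a cycle (augmented complex). -/
def cxCycles {V : Type} (k : Type) [Field k] [LinearOrder V]
    (Δ : Finset V → Prop) : (j : ℕ) → Submodule k (Faces Δ j →₀ k)
  | 0 => ⊤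
  | (n + 1) => LinearMap.ker (cxBoundary k Δ n)

/-- Nonvanishing of the reduced homology `H̃_{j-1}(Δ; k)`: there is a cycle
supported on faces of cardinality `j` that is not a boundary. -/
def HNontrivial {V : Type} (k : Type) [Field k] [LinearOrder V]
    (Δ : Finset V → Prop) (j : ℕ) : Prop :=
  ¬ (cxCycles k Δ j ≤ LinearMap.range (cxBoundary k Δ j))

/-- The induced subcomplex `Δ[S]` on a set `S` of vertices. -/
def restrictC {V : Type} (Δ : Finset V → Prop) (S : Set V) : Finset V → Prop :=
  fun F => ↑F ⊆ S ∧ Δ F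

/-- The Castelnuovo–Mumford regularity of `Δ` over the field `k`:
the largest `j` such that `H̃_{j-1}(Δ[S]; k) ≠ 0` for some subset `S` of the
vertices. -/
def regC {V : Type} [Fintype V] (k : Type) [Field k] (Δ : Finset V → Prop) : ℕ :=
  letI : LinearOrder V :=
    LinearOrder.lift' (Fintype.equivFin V) (Fintype.equivFin V).injective
  sSup {j : ℕ | ∃ S : Set V, HNontrivial k (restrictC Δ S) j}

/-- The deletion `del_Δ(x)`. -/
def delC {V : Type} (Δ : Finset V → Prop) (x : V) : Finset V → Prop :=
  fun F => Δ F ∧ x ∉ F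

/-- The link `lk_Δ(x)`. -/
def lkC {V : Type} (Δ : Finset V → Prop) (x : V) : Finset V → Prop :=
  fun F => x ∉ F ∧ Δ (insert x F)

/-! ## Independence complexes and regularity of graphs -/

/-- The independence complex of a graph, as a family of finsets. -/
def indepFaces {V : Type} (G : SimpleGraph V) : Finset V → Prop :=
  fun F => ∀ u ∈ F, ∀ v ∈ F, ¬ G.Adj u v

/-- The regularity `reg(G)` of a graph: the regularity of its independence
complex over `k`. -/
def gReg {V : Type} [Fintype V] (k : Type) [Field k] (G : SimpleGraph V) : ℕ :=
  regC k (indepFaces G)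

/-- The regularity of the subgraph of `G` induced on the vertex set `S`. -/
def gRegOn {V : Type} [Fintype V] (k : Type) [Field k] (G : SimpleGraph V)
    (S : Set V) : ℕ :=
  regC k (restrictC (indepFaces G) S)

/-! ## Geometric realization, suspension, wedge -/

/-- The geometric realization of a family of finsets `Δ` on a finite vertex
type: convex combinations of vertices supported on a face. -/
abbrev cxSpace {V : Type} [Fintype V] (Δ : Finset V → Prop) : Type :=
  {f : V → ℝ // (∃ F : Finset V, Δ F ∧ ∀ v, f v ≠ 0 → v ∈ F) ∧
    (∀ v, 0 ≤ f v) ∧ ∑ v, f v = 1}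

/-- Relation generating the unreduced suspension: the two ends of the cylinder
are collapsed to two (always present) poles. -/
def suspRel (X : Type) : (X × unitInterval ⊕ Bool) → (X × unitInterval ⊕ Bool) → Prop
  | Sum.inl (x, t), Sum.inr b => (t = 0 ∧ b = false) ∨ (t = 1 ∧ b = true)
  | _, _ => False

/-- The unreduced suspension `Σ X` (the join of `X` with a two-point space). -/
abbrev Susp (X : Type) [TopologicalSpace X] : Type := Quot (suspRel X)

/-- Relation generating the wedge sum with respect to chosen basepoints. -/
def wedgeRel (X Y : Type) (x₀ : X) (y₀ : Y) : X ⊕ Y → X ⊕ Y → Prop :=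
  fun p q => p = Sum.inl x₀ ∧ q = Sum.inr y₀

/-- The wedge sum `X ∨ Y` with respect to chosen basepoints. -/
abbrev Wedge (X Y : Type) [TopologicalSpace X] [TopologicalSpace Y]
    (x₀ : X) (y₀ : Y) : Type := Quot (wedgeRel X Y x₀ y₀)

/-! ## Graph invariants -/

/-- `M` is an induced matching of `G`: a set of edges, pairwise with distinct
endpoints and with no edge of `G` between the endpoints of distinct members. -/
def IsInducedMatching {V : Type} (G : SimpleGraph V) (M : Finset (V × V)) : Prop :=
  (∀ p ∈ M, G.Adj p.1 p.2) ∧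
    ∀ p ∈ M, ∀ q ∈ M, p ≠ q →
      p.1 ≠ q.1 ∧ p.1 ≠ q.2 ∧ p.2 ≠ q.1 ∧ p.2 ≠ q.2 ∧
      ¬ G.Adj p.1 q.1 ∧ ¬ G.Adj p.1 q.2 ∧ ¬ G.Adj p.2 q.1 ∧ ¬ G.Adj p.2 q.2

/-- The induced matching number `im(G)`. -/
def inducedMatchingNumber {V : Type} (G : SimpleGraph V) : ℕ :=
  sSup {n : ℕ | ∃ M : Finset (V × V), IsInducedMatching G M ∧ M.card = n}

/-- The independence number `α(G)`. -/
def indepNumber {V : Type} (G : SimpleGraph V) : ℕ :=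
  sSup {n : ℕ | ∃ s : Finset V, (∀ u ∈ s, ∀ v ∈ s, ¬ G.Adj u v) ∧ s.card = n}

/-- The decycling number `∇(G)`: the least size of a set of vertices whose
removal leaves an acyclic graph. -/
def decyclingNumber {V : Type} [Fintype V] (G : SimpleGraph V) : ℕ :=
  sInf {n : ℕ | ∃ D : Finset V, D.card = n ∧
    (G.induce {v : V | v ∉ D}).IsAcyclic}

/-- `K` contains an induced cycle on `n` vertices. -/
def HasInducedCycle {V : Type} (K : SimpleGraph V) (n : ℕ) : Prop :=
  ∃ f : Fin n ↪ V, ∀ i j : Fin n,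
    K.Adj (f i) (f j) ↔ ((j : ℕ) = ((i : ℕ) + 1) % n ∨ (i : ℕ) = ((j : ℕ) + 1) % n)

/-- A graph is cochordal if its complement is chordal, i.e. the complement has
no induced cycle of length at least `4`. -/
def Cochordal {V : Type} (H : SimpleGraph V) : Prop :=
  ∀ n : ℕ, 4 ≤ n → ¬ HasInducedCycle Hᶜ n

/-- The cochordal cover number `cochord(G)`: the least number of cochordal
subgraphs of `G` whose edge sets cover the edges of `G`. -/
def cochordCover {V : Type} (G : SimpleGraph V) : ℕ :=
  sInf {r : ℕ | ∃ H : Fin r → SimpleGraph V,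
    (∀ i, H i ≤ G ∧ Cochordal (H i)) ∧ ∀ u v, G.Adj u v → ∃ i, (H i).Adj u v}

/-- The graph `G*` on the edge set of `G`: two edges are adjacent iff the
subgraph induced by their endpoints is `2K₂` (disjoint, with no cross edges). -/
def starGraph {V : Type} (G : SimpleGraph V) : SimpleGraph G.edgeSet :=
  SimpleGraph.fromRel fun e f =>
    ∀ a ∈ (e.1 : Sym2 V), ∀ b ∈ (f.1 : Sym2 V), a ≠ b ∧ ¬ G.Adj a b

/-- The chromatic number, as a natural number. -/
def chromNum {W : Type} (H : SimpleGraph W) : ℕ :=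
  sInf {n : ℕ | ∃ c : W → Fin n, ∀ u v, H.Adj u v → c u ≠ c v}

/-- The clique number `ω`. -/
def cliqueNum {W : Type} (H : SimpleGraph W) : ℕ :=
  sSup {n : ℕ | ∃ s : Finset W, H.IsNClique n s}

/-- A graph is perfect if every induced subgraph has chromatic number equal to
its clique number. -/
def IsPerfect {W : Type} (H : SimpleGraph W) : Prop :=
  ∀ A : Set W, chromNum (H.induce A) = cliqueNum (H.induce A)

/-! ## Lozin transform, triple subdivision, whiskers -/

/-- Generating relation for the Lozin transform `L_x(G; Y, Z)`: delete `x`,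
add the path `y(=0) - a(=1) - b(=2) - z(=3)` on four new vertices, join `y`
to every vertex of `Y` and `z` to every vertex of `Z`. -/
def lozinRel {V : Type} (G : SimpleGraph V) (x : V) (Y Z : Set V) :
    ({w : V // w ≠ x} ⊕ Fin 4) → ({w : V // w ≠ x} ⊕ Fin 4) → Prop
  | Sum.inl u, Sum.inl w => G.Adj u.1 w.1
  | Sum.inl u, Sum.inr i => (i = 0 ∧ u.1 ∈ Y) ∨ (i = 3 ∧ u.1 ∈ Z)
  | Sum.inr i, Sum.inr j => (i : ℕ) + 1 = (j : ℕ)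
  | _, _ => False

/-- The Lozin transform `L_x(G; Y, Z)` of `G` at the vertex `x`. -/
def lozinModel {V : Type} (G : SimpleGraph V) (x : V) (Y Z : Set V) :
    SimpleGraph ({w : V // w ≠ x} ⊕ Fin 4) :=
  SimpleGraph.fromRel (lozinRel G x Y Z)

/-- `{Y, Z}` is a partition of the open neighborhood of `x`. -/
def IsLozinPartition {V : Type} (G : SimpleGraph V) (x : V) (Y Z : Set V) : Prop :=
  Y ∪ Z = G.neighborSet x ∧ Disjoint Y Z

/-- Generating relation for the triple subdivision of the edge `(u,v)`:
the edge `uv` is removed and replaced by the path `u - y(=0) - a(=1) - b(=2) - v`. -/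
def tripleSubRel {V : Type} (G : SimpleGraph V) (u v : V) :
    (V ⊕ Fin 3) → (V ⊕ Fin 3) → Prop
  | Sum.inl a, Sum.inl b => G.Adj a b ∧ ¬(a = u ∧ b = v) ∧ ¬(a = v ∧ b = u)
  | Sum.inl a, Sum.inr i => (a = u ∧ i = 0) ∨ (a = v ∧ i = 2)
  | Sum.inr i, Sum.inr j => (i : ℕ) + 1 = (j : ℕ)
  | _, _ => False

/-- The triple subdivision `L(G; e)` of `G` at the edge `e = (u,v)`. -/
def tripleSub {V : Type} (G : SimpleGraph V) (u v : V) : SimpleGraph (V ⊕ Fin 3) :=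
  SimpleGraph.fromRel (tripleSubRel G u v)

/-- Generating relation for the whisker `W_S(G)`: attach a new pendant vertex
to each vertex of `S`. -/
def whiskerSRel {V : Type} (G : SimpleGraph V) (S : Finset V) :
    (V ⊕ {s : V // s ∈ S}) → (V ⊕ {s : V // s ∈ S}) → Prop
  | Sum.inl a, Sum.inl b => G.Adj a b
  | Sum.inl a, Sum.inr s => a = s.1
  | _, _ => False

/-- The whisker graph `W_S(G)` on `V ⊕ S`. -/
def whiskerS {V : Type} (G : SimpleGraph V) (S : Finset V) :
    SimpleGraph (V ⊕ {s : V // s ∈ S}) :=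
  SimpleGraph.fromRel (whiskerSRel G S)

/-- Generating relation for the full whisker `W(G)`: attach a pendant vertex
to every vertex. -/
def whiskerRel {V : Type} (G : SimpleGraph V) : (V ⊕ V) → (V ⊕ V) → Prop
  | Sum.inl a, Sum.inl b => G.Adj a b
  | Sum.inl a, Sum.inr b => a = b
  | _, _ => False

/-- The full whisker graph `W(G)` on `V ⊕ V`. -/
def whiskerGraph {V : Type} (G : SimpleGraph V) : SimpleGraph (V ⊕ V) :=
  SimpleGraph.fromRel (whiskerRel G)

/-! ## Vertex decomposability -/

/-- The closed neighborhood of `x` inside the finset `A`. -/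
def closedNbrOn {V : Type} (G : SimpleGraph V) (A : Finset V) (x : V) : Finset V :=
  A.filter fun z => z = x ∨ G.Adj x z

/-- `T` is an independent set of `G`. -/
def IsIndepFinset {V : Type} (G : SimpleGraph V) (T : Finset V) : Prop :=
  ∀ u ∈ T, ∀ v ∈ T, ¬ G.Adj u v

/-- `x` is a shedding vertex of the induced subgraph `G[A]`. -/
def IsSheddingOn {V : Type} (G : SimpleGraph V) (A : Finset V) (x : V) : Prop :=
  ∀ T ⊆ A \ closedNbrOn G A x, IsIndepFinset G T →
    ∃ w ∈ A, G.Adj x w ∧ IsIndepFinset G (insert w T)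

/-- Vertex decomposability of the induced subgraph `G[A]`. -/
def VDOn {V : Type} (G : SimpleGraph V) : Finset V → Prop := fun A =>
  (∀ u ∈ A, ∀ v ∈ A, ¬ G.Adj u v) ∨
    ∃ x : {y : V // y ∈ A}, IsSheddingOn G A x.1 ∧
      VDOn G (A.erase x.1) ∧ VDOn G (A \ closedNbrOn G A x.1)
termination_by A => A.card
decreasing_by
  · exact Finset.card_erase_lt_of_mem x.2
  · refine Finset.card_lt_card ?_
    refine (Finset.ssubset_iff_of_subset Finset.sdiff_subset).2 ⟨x.1, x.2, ?_⟩
    simp [closedNbrOn, x.2]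

end
/-- Generating relation of the graph `H_j`: a path on `j` vertices `0, …, j-1`
with two pendant vertices attached to each of its two endpoints. -/
def hGraphRel (j : ℕ) : (Fin j ⊕ Fin 4) → (Fin j ⊕ Fin 4) → Prop
  | Sum.inl i, Sum.inl i' => (i : ℕ) + 1 = (i' : ℕ)
  | Sum.inl i, Sum.inr t =>
      ((i : ℕ) = 0 ∧ ((t : ℕ) = 0 ∨ (t : ℕ) = 1)) ∨
      ((i : ℕ) = j - 1 ∧ ((t : ℕ) = 2 ∨ (t : ℕ) = 3))
  | _, _ => False

/-- The graph `H_j`. -/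
def hGraph (j : ℕ) : SimpleGraph (Fin j ⊕ Fin 4) :=
  SimpleGraph.fromRel (hGraphRel j)

/-- `G` contains an induced copy of `H`. -/
def HasInducedCopy {V W : Type} (G : SimpleGraph V) (H : SimpleGraph W) : Prop :=
  ∃ f : W ↪ V, ∀ a b, G.Adj (f a) (f b) ↔ H.Adj a b
noncomputable section
namespace Lozin
set_option linter.unusedVariables false
set_option linter.unusedSectionVars false
open SimpleGraph
variable {V : Type} [Fintype V]

/-- Two edges (as elements of `Sym2 V`) form an induced `2K₂` in `G`. -/
def Dis (G : SimpleGraph V) (e f : Sym2 V) : Prop :=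
  e ≠ f ∧ ∀ a ∈ e, ∀ b ∈ f, a ≠ b ∧ ¬ G.Adj a b

lemma Dis.symm {G : SimpleGraph V} {e f : Sym2 V} (h : Dis G e f) : Dis G f e := by
  refine ⟨Ne.symm h.1, fun a ha b hb => ?_⟩
  obtain ⟨h1, h2⟩ := h.2 b hb a ha
  exact ⟨Ne.symm h1, fun hadj => h2 (G.adj_symm hadj)⟩

def ColorOK (G : SimpleGraph V) (k : ℕ) : Prop :=
  ∃ c : Sym2 V → ℕ, (∀ e ∈ G.edgeSet, c e < k) ∧
    ∀ e ∈ G.edgeSet, ∀ f ∈ G.edgeSet, Dis G e f → c e ≠ c f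

def myChrom (G : SimpleGraph V) : ℕ := sInf {k | ColorOK G k}

def MatchOK (G : SimpleGraph V) (s : Finset (Sym2 V)) : Prop :=
  (↑s ⊆ G.edgeSet) ∧ ∀ e ∈ s, ∀ f ∈ s, e ≠ f → Dis G e f

def myIM (G : SimpleGraph V) : ℕ := sSup {k | ∃ s, MatchOK G s ∧ s.card = k}

lemma colorOK_card (G : SimpleGraph V) : ColorOK G (Fintype.card (Sym2 V)) := by
  refine ⟨fun e => (Fintype.equivFin (Sym2 V) e).val, fun e _ => (Fintype.equivFin (Sym2 V) e).isLt,
    fun e _ f _ hd hc => hd.1 ?_⟩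
  have := Fin.val_injective hc
  exact (Fintype.equivFin (Sym2 V)).injective this

lemma myChrom_mem (G : SimpleGraph V) : ColorOK G (myChrom G) :=
  Nat.sInf_mem (s := {k | ColorOK G k}) ⟨_, colorOK_card G⟩

lemma myChrom_le {G : SimpleGraph V} {k : ℕ} (h : ColorOK G k) : myChrom G ≤ k :=
  Nat.sInf_le h

lemma myIM_bdd (G : SimpleGraph V) :
    BddAbove {k | ∃ s, MatchOK G s ∧ s.card = k} := by
  refine ⟨Fintype.card (Sym2 V), fun k hk => ?_⟩
  obtain ⟨s, _, rfl⟩ := hk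
  exact Finset.card_le_univ s

lemma myIM_mem (G : SimpleGraph V) : ∃ s, MatchOK G s ∧ s.card = myIM G := by
  have h := Nat.sSup_mem (s := {k | ∃ s, MatchOK G s ∧ s.card = k})
    ⟨0, ∅, ⟨by simp, by simp⟩, by simp⟩ (myIM_bdd G)
  exact h

lemma le_myIM {G : SimpleGraph V} {s : Finset (Sym2 V)} (h : MatchOK G s) :
    s.card ≤ myIM G :=
  le_csSup (myIM_bdd G) ⟨s, h, rfl⟩

lemma starGraph_adj (G : SimpleGraph V) (e f : G.edgeSet) :
    (_root_.starGraph G).Adj e f ↔ Dis G e.1 f.1 := by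
  have hsym : ∀ (x y : G.edgeSet),
      (∀ a ∈ (x.1 : Sym2 V), ∀ b ∈ (y.1 : Sym2 V), a ≠ b ∧ ¬ G.Adj a b) →
      (∀ a ∈ (y.1 : Sym2 V), ∀ b ∈ (x.1 : Sym2 V), a ≠ b ∧ ¬ G.Adj a b) := by
    intro x y h a ha b hb
    obtain ⟨h1, h2⟩ := h b hb a ha
    exact ⟨Ne.symm h1, fun hadj => h2 (G.adj_symm hadj)⟩
  rw [_root_.starGraph, SimpleGraph.fromRel_adj]
  constructor
  · rintro ⟨hne, h | h⟩
    · exact ⟨fun hh => hne (Subtype.ext hh), h⟩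
    · exact ⟨fun hh => hne (Subtype.ext hh), hsym _ _ h⟩
  · rintro ⟨hne, h⟩
    exact ⟨fun hh => hne (congrArg Subtype.val hh), Or.inl h⟩

lemma chromNum_star_le (G : SimpleGraph V) : chromNum (_root_.starGraph G) ≤ myChrom G := by
  obtain ⟨c, hb, hp⟩ := myChrom_mem G
  refine Nat.sInf_le ⟨fun e => ⟨c e.1, hb e.1 e.2⟩, fun u v hadj => ?_⟩
  have hd : Dis G u.1 v.1 := (starGraph_adj G u v).1 hadj
  intro hc
  exact hp u.1 u.2 v.1 v.2 hd (by simpa using congrArg Fin.val hc)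

lemma cliqueNum_bdd (G : SimpleGraph V) :
    BddAbove {n | ∃ s : Finset G.edgeSet, (_root_.starGraph G).IsNClique n s} := by
  refine ⟨Fintype.card G.edgeSet, fun k hk => ?_⟩
  obtain ⟨s, hs⟩ := hk
  rw [← hs.card_eq]
  exact Finset.card_le_univ s

lemma myIM_le_cliqueNum (G : SimpleGraph V) : myIM G ≤ _root_.cliqueNum (_root_.starGraph G) := by
  obtain ⟨s, ⟨hsub, hdis⟩, hcard⟩ := myIM_mem G
  have hinj : Function.Injective (fun x : {x // x ∈ s} => (⟨x.1, hsub x.2⟩ : G.edgeSet)) := by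
    intro x y hxy
    simp only [Subtype.mk.injEq] at hxy
    exact Subtype.ext hxy
  set t : Finset G.edgeSet := s.attach.map ⟨_, hinj⟩ with ht
  have htcard : t.card = s.card := by simp [ht]
  have hclique : (_root_.starGraph G).IsNClique (myIM G) t := by
    constructor
    · intro u hu v hv huv
      rw [Finset.mem_coe, ht, Finset.mem_map] at hu hv
      obtain ⟨⟨eu, heu⟩, -, rfl⟩ := hu
      obtain ⟨⟨ev, hev⟩, -, rfl⟩ := hv
      rw [starGraph_adj]
      refine hdis eu heu ev hev ?_
      intro hh
      exact huv (Subtype.ext hh)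
    · rw [htcard, hcard]
  exact le_csSup (cliqueNum_bdd G) ⟨t, hclique⟩
/-! ### Deleting the edges at a set of vertices -/

def Meets (e : Sym2 V) (Z : Set V) : Prop := ∃ a ∈ e, a ∈ Z

def delZ (G : SimpleGraph V) (Z : Set V) : SimpleGraph V where
  Adj x y := G.Adj x y ∧ x ∉ Z ∧ y ∉ Z
  symm := ⟨by rintro x y ⟨h, hx, hy⟩; exact ⟨G.adj_symm h, hy, hx⟩⟩
  loopless := ⟨by rintro x ⟨h, -, -⟩; exact G.irrefl h⟩

lemma delZ_adj {G : SimpleGraph V} {Z : Set V} {x y : V} :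
    (delZ G Z).Adj x y ↔ G.Adj x y ∧ x ∉ Z ∧ y ∉ Z := Iff.rfl

lemma delZ_edge_iff {G : SimpleGraph V} {Z : Set V} {e : Sym2 V} :
    e ∈ (delZ G Z).edgeSet ↔ e ∈ G.edgeSet ∧ ¬ Meets e Z := by
  induction e using Sym2.inductionOn with
  | hf a b =>
    simp only [SimpleGraph.mem_edgeSet, delZ_adj, Meets]
    constructor
    · rintro ⟨h, ha, hb⟩
      refine ⟨h, ?_⟩
      rintro ⟨x, hx, hxz⟩
      rw [Sym2.mem_iff] at hx
      rcases hx with rfl | rfl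
      · exact ha hxz
      · exact hb hxz
    · rintro ⟨h, hm⟩
      refine ⟨h, fun ha => hm ⟨a, ?_, ha⟩, fun hb => hm ⟨b, ?_, hb⟩⟩
      · simp
      · simp

lemma delZ_edge_subset {G : SimpleGraph V} {Z : Set V} :
    (delZ G Z).edgeSet ⊆ G.edgeSet := fun _ he => (delZ_edge_iff.1 he).1

lemma delZ_not_mem {G : SimpleGraph V} {Z : Set V} {e : Sym2 V}
    (he : e ∈ (delZ G Z).edgeSet) {a : V} (ha : a ∈ e) : a ∉ Z := by
  intro haz
  exact (delZ_edge_iff.1 he).2 ⟨a, ha, haz⟩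

lemma delZ_ncard_lt {G : SimpleGraph V} {Z : Set V}
    (h : ∃ e ∈ G.edgeSet, Meets e Z) :
    (delZ G Z).edgeSet.ncard < G.edgeSet.ncard := by
  obtain ⟨e, he, hm⟩ := h
  refine Set.ncard_lt_ncard ⟨delZ_edge_subset, fun hsub => ?_⟩ (Set.toFinite _)
  have := (delZ_edge_iff.1 (hsub he)).2
  exact this hm

/-! ### The forbidden-subgraph class and its closure under `delZ` -/

def NoShort (m : ℕ) (G : SimpleGraph V) : Prop :=
  (∀ n, 3 ≤ n → n ≤ 3 * m + 3 → ¬ HasInducedCycle G n) ∧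
  (∀ j, 1 ≤ j → j ≤ 3 * m + 3 → ¬ HasInducedCopy G (hGraph j))

lemma hGraph_no_isolated {j : ℕ} (hj : 1 ≤ j) (a : Fin j ⊕ Fin 4) :
    ∃ b, (hGraph j).Adj a b := by
  have hadj : ∀ x y, hGraphRel j x y → x ≠ y → (hGraph j).Adj x y := by
    intro x y h hne
    rw [hGraph, SimpleGraph.fromRel_adj]
    exact ⟨hne, Or.inl h⟩
  cases a with
  | inl i =>
    by_cases hi : (i : ℕ) = 0
    · refine ⟨Sum.inr ⟨0, by norm_num⟩, hadj _ _ (Or.inl ⟨hi, Or.inl rfl⟩) (by simp)⟩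
    · refine ⟨Sum.inl ⟨(i : ℕ) - 1, by omega⟩, ?_⟩
      have h : hGraphRel j (Sum.inl ⟨(i : ℕ) - 1, by omega⟩) (Sum.inl i) := by
        show ((i : ℕ) - 1) + 1 = (i : ℕ)
        omega
      have := hadj _ _ h (by
        intro hh
        have : (i : ℕ) - 1 = (i : ℕ) := by
          have := congrArg (fun x => match x with | Sum.inl u => (u : ℕ) | Sum.inr _ => 0) hh
          simpa using this
        omega)
      exact (hGraph j).adj_symm this
  | inr t =>
    by_cases ht : (t : ℕ) ≤ 1
    · refine ⟨Sum.inl ⟨0, hj⟩, ?_⟩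
      have h : hGraphRel j (Sum.inl ⟨0, hj⟩) (Sum.inr t) := by
        refine Or.inl ⟨rfl, ?_⟩
        omega
      exact (hGraph j).adj_symm (hadj _ _ h (by simp))
    · refine ⟨Sum.inl ⟨j - 1, by omega⟩, ?_⟩
      have h : hGraphRel j (Sum.inl ⟨j - 1, by omega⟩) (Sum.inr t) := by
        refine Or.inr ⟨rfl, ?_⟩
        have := t.isLt
        omega
      exact (hGraph j).adj_symm (hadj _ _ h (by simp))

lemma noShort_delZ {m : ℕ} {G : SimpleGraph V} (Z : Set V) (h : NoShort m G) :
    NoShort m (delZ G Z) := by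
  constructor
  · intro n h3 hn hcyc
    obtain ⟨f, hf⟩ := hcyc
    have hnZ : ∀ i : Fin n, (f i) ∉ Z := by
      intro i
      set j : Fin n := ⟨((i : ℕ) + 1) % n, Nat.mod_lt _ (by omega)⟩ with hj
      have hpat : ((j : ℕ) = ((i : ℕ) + 1) % n ∨ (i : ℕ) = ((j : ℕ) + 1) % n) := Or.inl rfl
      have hadj := (hf i j).2 hpat
      exact hadj.2.1
    refine h.1 n h3 hn ⟨f, fun i j => ?_⟩
    rw [← hf i j]
    constructor
    · intro hadj
      exact ⟨hadj, hnZ i, hnZ j⟩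
    · intro hadj
      exact hadj.1
  · intro j h1 hjn hcopy
    obtain ⟨f, hf⟩ := hcopy
    have hnZ : ∀ a, (f a) ∉ Z := by
      intro a
      obtain ⟨b, hb⟩ := hGraph_no_isolated h1 a
      have hadj := (hf a b).2 hb
      exact hadj.2.1
    refine h.2 j h1 hjn ⟨f, fun a b => ?_⟩
    rw [← hf a b]
    constructor
    · intro hadj
      exact ⟨hadj, hnZ a, hnZ b⟩
    · intro hadj
      exact hadj.1

/-! ### The main step lemma -/

lemma dis_of_delZ {G : SimpleGraph V} {Z : Set V} {e f : Sym2 V}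
    (he : e ∈ (delZ G Z).edgeSet) (hf : f ∈ (delZ G Z).edgeSet)
    (h : Dis (delZ G Z) e f) : Dis G e f := by
  refine ⟨h.1, fun a ha b hb => ⟨(h.2 a ha b hb).1, fun hadj => ?_⟩⟩
  exact (h.2 a ha b hb).2 ⟨hadj, delZ_not_mem he ha, delZ_not_mem hf hb⟩

lemma dis_to_delZ {G : SimpleGraph V} {Z : Set V} {e f : Sym2 V}
    (h : Dis G e f) : Dis (delZ G Z) e f := by
  refine ⟨h.1, fun a ha b hb => ⟨(h.2 a ha b hb).1, fun hadj => ?_⟩⟩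
  exact (h.2 a ha b hb).2 hadj.1

lemma step_lemma (G : SimpleGraph V) (Z : Set V) (p q : ℕ)
    (cz : Sym2 V → ℕ)
    (hcz_bound : ∀ e ∈ G.edgeSet, Meets e Z → cz e < p)
    (hcz_ok : ∀ e ∈ G.edgeSet, ∀ f ∈ G.edgeSet, Meets e Z → Meets f Z →
      cz e = cz f → ¬ Dis G e f)
    (T : Finset (Sym2 V))
    (hT_sub : ↑T ⊆ G.edgeSet)
    (hT_meets : ∀ e ∈ T, Meets e Z)
    (hT_card : T.card = q)
    (hT_pair : ∀ e ∈ T, ∀ f ∈ T, e ≠ f → Dis G e f)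
    (hT_far : ∀ e ∈ T, ∀ f ∈ G.edgeSet, ¬ Meets f Z → Dis G e f) :
    myChrom G ≤ myChrom (delZ G Z) + p ∧ myIM (delZ G Z) + q ≤ myIM G := by
  constructor
  · obtain ⟨c', hb', hp'⟩ := myChrom_mem (delZ G Z)
    refine myChrom_le ⟨fun e => if Meets e Z then myChrom (delZ G Z) + cz e else c' e,
      ?_, ?_⟩
    · intro e he
      beta_reduce
      by_cases hm : Meets e Z
      · rw [if_pos hm]
        have := hcz_bound e he hm
        omega
      · rw [if_neg hm]
        have he' : e ∈ (delZ G Z).edgeSet := delZ_edge_iff.2 ⟨he, hm⟩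
        have := hb' e he'
        omega
    · intro e he f hf hd
      beta_reduce
      by_cases hme : Meets e Z <;> by_cases hmf : Meets f Z
      · rw [if_pos hme, if_pos hmf]
        intro hc
        exact hcz_ok e he f hf hme hmf (by omega) hd
      · rw [if_pos hme, if_neg hmf]
        have hf' : f ∈ (delZ G Z).edgeSet := delZ_edge_iff.2 ⟨hf, hmf⟩
        have := hb' f hf'
        omega
      · rw [if_neg hme, if_pos hmf]
        have he' : e ∈ (delZ G Z).edgeSet := delZ_edge_iff.2 ⟨he, hme⟩
        have := hb' e he'
        omega
      · rw [if_neg hme, if_neg hmf]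
        have he' : e ∈ (delZ G Z).edgeSet := delZ_edge_iff.2 ⟨he, hme⟩
        have hf' : f ∈ (delZ G Z).edgeSet := delZ_edge_iff.2 ⟨hf, hmf⟩
        exact hp' e he' f hf' (dis_to_delZ hd)
  · obtain ⟨s', ⟨hs'sub, hs'dis⟩, hs'card⟩ := myIM_mem (delZ G Z)
    have hdisj : Disjoint s' T := by
      rw [Finset.disjoint_left]
      intro e hes heT
      exact (delZ_edge_iff.1 (hs'sub hes)).2 (hT_meets e heT)
    have hcard : (s' ∪ T).card = myIM (delZ G Z) + q := by
      rw [Finset.card_union_of_disjoint hdisj, hs'card, hT_card]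
    rw [← hcard]
    refine le_myIM ⟨?_, ?_⟩
    · intro e he
      rw [Finset.coe_union] at he
      rcases he with he | he
      · exact delZ_edge_subset (hs'sub he)
      · exact hT_sub he
    · intro e he f hf hne
      rw [Finset.mem_union] at he hf
      rcases he with he | he <;> rcases hf with hf | hf
      · exact dis_of_delZ (hs'sub he) (hs'sub hf) (hs'dis e he f hf hne)
      · exact (hT_far f hf e (delZ_edge_subset (hs'sub he))
          (delZ_edge_iff.1 (hs'sub he)).2).symm
      · exact hT_far e he f (delZ_edge_subset (hs'sub hf))
          (delZ_edge_iff.1 (hs'sub hf)).2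
      · exact hT_pair e he f hf hne
/-! ### Cycles -/

def CycF (G : SimpleGraph V) (n : ℕ) (w : ℕ → V) : Prop :=
  (∀ t, t + 1 < n → G.Adj (w t) (w (t + 1))) ∧
  G.Adj (w (n - 1)) (w 0) ∧
  (∀ i, i < n → ∀ j, j < n → w i = w j → i = j)

def HasCycN (G : SimpleGraph V) (n : ℕ) : Prop := ∃ w, CycF G n w

lemma mod_inj {n s i j : ℕ} (hi : i < n) (hj : j < n)
    (h : (s + i) % n = (s + j) % n) : i = j := by
  have h2 : i % n = j % n := Nat.ModEq.add_left_cancel' s h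
  rwa [Nat.mod_eq_of_lt hi, Nat.mod_eq_of_lt hj] at h2

lemma cyc_adj_mod {G : SimpleGraph V} {n : ℕ} {w : ℕ → V} (hc : CycF G n w)
    (hn : 3 ≤ n) (t : ℕ) : G.Adj (w (t % n)) (w ((t + 1) % n)) := by
  have hlt : t % n < n := Nat.mod_lt _ (by omega)
  rw [← Nat.mod_add_mod]
  by_cases h : t % n = n - 1
  · rw [h]
    have h0 : (n - 1 + 1) % n = 0 := by
      have hh : n - 1 + 1 = n := by omega
      rw [hh, Nat.mod_self]
    rw [h0]
    exact hc.2.1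
  · have h2 : t % n + 1 < n := by omega
    rw [Nat.mod_eq_of_lt h2]
    exact hc.1 _ h2

lemma CycF.rotate {G : SimpleGraph V} {n : ℕ} {w : ℕ → V} (hc : CycF G n w)
    (hn : 3 ≤ n) (s : ℕ) : CycF G n (fun t => w ((t + s) % n)) := by
  refine ⟨?_, ?_, ?_⟩
  · intro t ht
    beta_reduce
    have := cyc_adj_mod hc hn (t + s)
    have he : t + 1 + s = t + s + 1 := by omega
    rw [he]
    exact this
  · beta_reduce
    have := cyc_adj_mod hc hn (n - 1 + s)
    have he : n - 1 + s + 1 = n + s := by omega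
    rw [he] at this
    have h2 : (n + s) % n = (0 + s) % n := by
      rw [Nat.add_comm n s, Nat.add_mod_right, Nat.zero_add]
    rw [h2] at this
    exact this
  · intro i hi j hj hij
    beta_reduce at hij
    have h1 : (i + s) % n < n := Nat.mod_lt _ (by omega)
    have h2 : (j + s) % n < n := Nat.mod_lt _ (by omega)
    have h3 := hc.2.2 _ h1 _ h2 hij
    have h4 : (s + i) % n = (s + j) % n := by
      rw [Nat.add_comm s i, Nat.add_comm s j]; exact h3
    exact mod_inj hi hj h4

/-- Chordlessness of a minimal cycle. -/
lemma chordless_aux {G : SimpleGraph V} {n : ℕ} {w : ℕ → V} (hc : CycF G n w)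
    (hn : 3 ≤ n)
    (hmin : ∀ n', 3 ≤ n' → HasCycN G n' → n ≤ n')
    {a b : ℕ} (hab : a < b) (hb : b < n) (hadj : G.Adj (w a) (w b)) :
    b = a + 1 ∨ (a = 0 ∧ b = n - 1) := by
  by_contra hcon
  push_neg at hcon
  set k := b - a with hk
  have hk1 : 2 ≤ k := by
    rcases Nat.lt_or_ge k 2 with h | h
    · interval_cases k
      · omega
      · exact absurd (by omega) hcon.1
    · exact h
  have hk2 : k ≤ n - 2 := by
    by_contra hh
    push_neg at hh
    have : k = n - 1 := by omega
    have ha0 : a = 0 := by omega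
    have hb0 : b = n - 1 := by omega
    exact hcon.2 ha0 hb0
  have hcyc : HasCycN G (k + 1) := by
    refine ⟨fun t => w (a + t), ?_, ?_, ?_⟩
    · intro t ht
      beta_reduce
      have he : a + (t + 1) = (a + t) + 1 := by omega
      rw [he]
      exact hc.1 _ (by omega)
    · beta_reduce
      have he : a + (k + 1 - 1) = b := by omega
      rw [he, Nat.add_zero]
      exact G.adj_symm hadj
    · intro i hi j hj hij
      beta_reduce at hij
      have := hc.2.2 _ (by omega) _ (by omega) hij
      omega
  have := hmin (k + 1) (by omega) hcyc
  omega

lemma chordless {G : SimpleGraph V} {n : ℕ} {w : ℕ → V} (hc : CycF G n w)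
    (hn : 3 ≤ n)
    (hmin : ∀ n', 3 ≤ n' → HasCycN G n' → n ≤ n')
    {a b : ℕ} (ha : a < n) (hb : b < n) (hadj : G.Adj (w a) (w b)) :
    b = a + 1 ∨ a = b + 1 ∨ (a = 0 ∧ b = n - 1) ∨ (b = 0 ∧ a = n - 1) := by
  rcases Nat.lt_trichotomy a b with h | h | h
  · rcases chordless_aux hc hn hmin h hb hadj with h1 | h1
    · exact Or.inl h1
    · exact Or.inr (Or.inr (Or.inl h1))
  · exact absurd (h ▸ hadj) (G.irrefl)
  · rcases chordless_aux hc hn hmin h ha (G.adj_symm hadj) with h1 | h1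
    · exact Or.inr (Or.inl h1)
    · exact Or.inr (Or.inr (Or.inr h1))

/-- A vertex off a minimal cycle cannot have two neighbours on the cycle. -/
lemma ext_unique {G : SimpleGraph V} {n : ℕ} {w : ℕ → V} (hc : CycF G n w)
    (hn : 5 ≤ n)
    (hmin : ∀ n', 3 ≤ n' → HasCycN G n' → n ≤ n')
    {x : V} (hx : ∀ t, t < n → x ≠ w t)
    {a b : ℕ} (ha : a < n) (hb : b < n) (hab : a ≠ b)
    (h1 : G.Adj x (w a)) (h2 : G.Adj x (w b)) : False := by
  -- wlog a < b
  wlog hlt : a < b generalizing a b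
  · exact this hb ha (Ne.symm hab) h2 h1 (by omega)
  set k := b - a with hk
  have hk1 : 1 ≤ k := by omega
  rcases Nat.lt_or_ge (k + 2) n with hside | hside
  · -- short side through the chord x
    have hcyc : HasCycN G (k + 2) := by
      refine ⟨fun t => if t = 0 then x else w (a + (t - 1)), ?_, ?_, ?_⟩
      · intro t ht
        beta_reduce
        by_cases h0 : t = 0
        · subst h0
          simp only [if_pos rfl, if_neg (by omega : (0:ℕ) + 1 ≠ 0)]
          simpa using h1
        · rw [if_neg h0, if_neg (by omega : t + 1 ≠ 0)]
          have he : a + (t + 1 - 1) = (a + (t - 1)) + 1 := by omega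
          rw [he]
          exact hc.1 _ (by omega)
      · beta_reduce
        rw [if_neg (by omega : k + 2 - 1 ≠ 0), if_pos rfl]
        have he : a + (k + 2 - 1 - 1) = b := by omega
        rw [he]
        exact G.adj_symm h2
      · intro i hi j hj hij
        beta_reduce at hij
        by_cases hi0 : i = 0 <;> by_cases hj0 : j = 0
        · omega
        · rw [if_pos hi0, if_neg hj0] at hij
          exact absurd hij (hx _ (by omega))
        · rw [if_neg hi0, if_pos hj0] at hij
          exact absurd hij.symm (hx _ (by omega))
        · rw [if_neg hi0, if_neg hj0] at hij
          have := hc.2.2 _ (by omega) _ (by omega) hij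
          omega
    have := hmin (k + 2) (by omega) hcyc
    omega
  · -- long side: go the other way around
    have hkn : k ≤ n - 1 := by omega
    have hcyc : HasCycN G (n - k + 2) := by
      refine ⟨fun t => if t = 0 then x else w ((b + (t - 1)) % n), ?_, ?_, ?_⟩
      · intro t ht
        beta_reduce
        by_cases h0 : t = 0
        · subst h0
          simp only [if_pos rfl, if_neg (by omega : (0:ℕ) + 1 ≠ 0)]
          have : (b + (0 + 1 - 1)) % n = b := by
            simp [Nat.mod_eq_of_lt hb]
          rw [this]
          exact h2
        · rw [if_neg h0, if_neg (by omega : t + 1 ≠ 0)]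
          have he : b + (t + 1 - 1) = (b + (t - 1)) + 1 := by omega
          rw [he]
          exact cyc_adj_mod hc (by omega) _
      · beta_reduce
        rw [if_neg (by omega : n - k + 2 - 1 ≠ 0), if_pos rfl]
        have he : b + (n - k + 2 - 1 - 1) = a + n := by omega
        rw [he]
        have h3 : (a + n) % n = a := by
          rw [Nat.add_mod_right, Nat.mod_eq_of_lt ha]
        rw [h3]
        exact G.adj_symm h1
      · intro i hi j hj hij
        beta_reduce at hij
        by_cases hi0 : i = 0 <;> by_cases hj0 : j = 0
        · omega
        · rw [if_pos hi0, if_neg hj0] at hij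
          exact absurd hij (hx _ (Nat.mod_lt _ (by omega)))
        · rw [if_neg hi0, if_pos hj0] at hij
          exact absurd hij.symm (hx _ (Nat.mod_lt _ (by omega)))
        · rw [if_neg hi0, if_neg hj0] at hij
          have h3 := hc.2.2 _ (Nat.mod_lt _ (by omega)) _ (Nat.mod_lt _ (by omega)) hij
          have h4 : i - 1 = j - 1 := mod_inj (n := n) (s := b) (by omega) (by omega) h3
          omega
    have := hmin (n - k + 2) (by omega) hcyc
    omega
/-- Two distinct vertices off a minimal cycle, each adjacent to the cycle,
cannot be adjacent to each other (cycle length ≥ 7). -/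
lemma pend_pair {G : SimpleGraph V} {n : ℕ} {w : ℕ → V} (hc : CycF G n w)
    (hn : 7 ≤ n)
    (hmin : ∀ n', 3 ≤ n' → HasCycN G n' → n ≤ n')
    {x y : V} (hx : ∀ t, t < n → x ≠ w t) (hy : ∀ t, t < n → y ≠ w t)
    (hxy : x ≠ y)
    {a b : ℕ} (ha : a < n) (hb : b < n)
    (h1 : G.Adj x (w a)) (h2 : G.Adj y (w b)) (h3 : G.Adj x y) : False := by
  rcases eq_or_ne a b with rfl | hab
  · -- triangle x y (w a)
    have hcyc : HasCycN G 3 := by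
      refine ⟨fun t => if t = 0 then x else if t = 1 then y else w a, ?_, ?_, ?_⟩
      · intro t ht
        have ht2 : t < 2 := by omega
        interval_cases t
        · simpa using h3
        · simpa using h2
      · simpa using G.adj_symm h1
      · intro i hi j hj hij
        beta_reduce at hij
        by_cases hi0 : i = 0 <;> by_cases hj0 : j = 0
        · omega
        · rw [if_pos hi0, if_neg hj0] at hij
          by_cases hj1 : j = 1
          · rw [if_pos hj1] at hij
            exact absurd hij hxy
          · rw [if_neg hj1] at hij
            exact absurd hij (hx a ha)
        · rw [if_neg hi0, if_pos hj0] at hij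
          by_cases hi1 : i = 1
          · rw [if_pos hi1] at hij
            exact absurd hij.symm hxy
          · rw [if_neg hi1] at hij
            exact absurd hij.symm (hx a ha)
        · rw [if_neg hi0, if_neg hj0] at hij
          by_cases hi1 : i = 1 <;> by_cases hj1 : j = 1
          · omega
          · rw [if_pos hi1, if_neg hj1] at hij
            exact absurd hij (hy a ha)
          · rw [if_neg hi1, if_pos hj1] at hij
            exact absurd hij.symm (hy a ha)
          · omega
    have := hmin 3 (by omega) hcyc
    omega
  · wlog hlt : a < b generalizing a b x y
    · exact this hy hx (Ne.symm hxy) hb ha h2 h1 (G.adj_symm h3) (Ne.symm hab) (by omega)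
    set k := b - a with hk
    have hk1 : 1 ≤ k := by omega
    rcases Nat.lt_or_ge (k + 3) n with hside | hside
    · have hcyc : HasCycN G (k + 3) := by
        refine ⟨fun t => if t = 0 then x else if t ≤ k + 1 then w (a + (t - 1)) else y,
          ?_, ?_, ?_⟩
        · intro t ht
          beta_reduce
          by_cases h0 : t = 0
          · subst h0
            simp only [if_pos rfl, if_neg (by omega : (0:ℕ) + 1 ≠ 0),
              if_pos (by omega : (0:ℕ) + 1 ≤ k + 1)]
            simpa using h1
          · rw [if_neg h0]
            by_cases ht1 : t ≤ k
            · rw [if_pos (by omega : t ≤ k + 1), if_neg (by omega : t + 1 ≠ 0),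
                if_pos (by omega : t + 1 ≤ k + 1)]
              have he : a + (t + 1 - 1) = (a + (t - 1)) + 1 := by omega
              rw [he]
              exact hc.1 _ (by omega)
            · -- t = k + 1
              have ht2 : t = k + 1 := by omega
              subst ht2
              rw [if_pos (le_refl _), if_neg (by omega : k + 1 + 1 ≠ 0),
                if_neg (by omega : ¬ k + 1 + 1 ≤ k + 1)]
              have he : a + (k + 1 - 1) = b := by omega
              rw [he]
              exact G.adj_symm h2
        · beta_reduce
          rw [if_neg (by omega : k + 3 - 1 ≠ 0), if_neg (by omega : ¬ k + 3 - 1 ≤ k + 1),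
            if_pos rfl]
          exact G.adj_symm h3
        · intro i hi j hj hij
          beta_reduce at hij
          by_cases hi0 : i = 0 <;> by_cases hj0 : j = 0
          · omega
          · rw [if_pos hi0, if_neg hj0] at hij
            by_cases hj1 : j ≤ k + 1
            · rw [if_pos hj1] at hij
              exact absurd hij (hx _ (by omega))
            · rw [if_neg hj1] at hij
              exact absurd hij hxy
          · rw [if_neg hi0, if_pos hj0] at hij
            by_cases hi1 : i ≤ k + 1
            · rw [if_pos hi1] at hij
              exact absurd hij.symm (hx _ (by omega))
            · rw [if_neg hi1] at hij
              exact absurd hij.symm hxy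
          · rw [if_neg hi0, if_neg hj0] at hij
            by_cases hi1 : i ≤ k + 1 <;> by_cases hj1 : j ≤ k + 1
            · rw [if_pos hi1, if_pos hj1] at hij
              have := hc.2.2 _ (by omega) _ (by omega) hij
              omega
            · rw [if_pos hi1, if_neg hj1] at hij
              exact absurd hij.symm (hy _ (by omega))
            · rw [if_neg hi1, if_pos hj1] at hij
              exact absurd hij (hy _ (by omega))
            · omega
      have := hmin (k + 3) (by omega) hcyc
      omega
    · -- long side
      have hkn : k ≤ n - 1 := by omega
      have hcyc : HasCycN G (n - k + 3) := by
        refine ⟨fun t => if t = 0 then x else if t = 1 then y else w ((b + (t - 2)) % n),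
          ?_, ?_, ?_⟩
        · intro t ht
          beta_reduce
          by_cases h0 : t = 0
          · subst h0
            simpa using h3
          · by_cases h1' : t = 1
            · subst h1'
              rw [if_neg (by omega), if_pos rfl, if_neg (by omega), if_neg (by omega)]
              have he : (b + (1 + 1 - 2)) % n = b := by
                simp [Nat.mod_eq_of_lt hb]
              rw [he]
              exact h2
            · rw [if_neg h0, if_neg h1', if_neg (by omega), if_neg (by omega)]
              have he : b + (t + 1 - 2) = (b + (t - 2)) + 1 := by omega
              rw [he]
              exact cyc_adj_mod hc (by omega) _
        · beta_reduce
          rw [if_neg (by omega : n - k + 3 - 1 ≠ 0), if_neg (by omega : n - k + 3 - 1 ≠ 1),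
            if_pos rfl]
          have he : b + (n - k + 3 - 1 - 2) = a + n := by omega
          rw [he]
          have h4 : (a + n) % n = a := by
            rw [Nat.add_mod_right, Nat.mod_eq_of_lt ha]
          rw [h4]
          exact G.adj_symm h1
        · intro i hi j hj hij
          beta_reduce at hij
          by_cases hi0 : i = 0 <;> by_cases hj0 : j = 0
          · omega
          · rw [if_pos hi0] at hij
            by_cases hj1 : j = 1
            · rw [if_neg hj0, if_pos hj1] at hij
              exact absurd hij hxy
            · rw [if_neg hj0, if_neg hj1] at hij
              exact absurd hij (hx _ (Nat.mod_lt _ (by omega)))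
          · rw [if_pos hj0] at hij
            by_cases hi1 : i = 1
            · rw [if_neg hi0, if_pos hi1] at hij
              exact absurd hij.symm hxy
            · rw [if_neg hi0, if_neg hi1] at hij
              exact absurd hij.symm (hx _ (Nat.mod_lt _ (by omega)))
          · rw [if_neg hi0, if_neg hj0] at hij
            by_cases hi1 : i = 1 <;> by_cases hj1 : j = 1
            · omega
            · rw [if_pos hi1, if_neg hj1] at hij
              exact absurd hij (hy _ (Nat.mod_lt _ (by omega)))
            · rw [if_neg hi1, if_pos hj1] at hij
              exact absurd hij.symm (hy _ (Nat.mod_lt _ (by omega)))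
            · rw [if_neg hi1, if_neg hj1] at hij
              have h5 := hc.2.2 _ (Nat.mod_lt _ (by omega)) _ (Nat.mod_lt _ (by omega)) hij
              have h6 : i - 2 = j - 2 := mod_inj (n := n) (s := b) (by omega) (by omega) h5
              omega
      have := hmin (n - k + 3) (by omega) hcyc
      omega
/-! ### Paths, longest paths, and the dichotomy -/

def PathF (G : SimpleGraph V) (n : ℕ) (p : ℕ → V) : Prop :=
  (∀ t, t + 1 ≤ n → G.Adj (p t) (p (t + 1))) ∧
  (∀ i, i ≤ n → ∀ j, j ≤ n → p i = p j → i = j)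

lemma exists_max_path (G : SimpleGraph V) (hedge : ∃ e, e ∈ G.edgeSet) :
    ∃ n p, PathF G n p ∧ 1 ≤ n ∧ ∀ p', ¬ PathF G (n + 1) p' := by
  set S : Set ℕ := {n | ∃ p, PathF G n p} with hS
  have h1 : 1 ∈ S := by
    obtain ⟨e, he⟩ := hedge
    induction e using Sym2.inductionOn with
    | hf a b =>
      rw [SimpleGraph.mem_edgeSet] at he
      refine ⟨fun t => if t = 0 then a else b, fun t ht => ?_, fun i hi j hj hij => ?_⟩
      · have ht0 : t = 0 := by omega
        subst ht0
        simpa using he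
      · beta_reduce at hij
        by_cases hi0 : i = 0 <;> by_cases hj0 : j = 0
        · omega
        · rw [if_pos hi0, if_neg hj0] at hij
          exact absurd hij (G.ne_of_adj he)
        · rw [if_neg hi0, if_pos hj0] at hij
          exact absurd hij.symm (G.ne_of_adj he)
        · omega
  have hbdd : BddAbove S := by
    refine ⟨Fintype.card V, fun n hn => ?_⟩
    obtain ⟨p, hp⟩ := hn
    have hinj : Function.Injective (fun i : Fin (n + 1) => p i.val) := by
      intro i j hij
      exact Fin.ext (hp.2 _ (by omega) _ (by omega) hij)
    have h2 := Fintype.card_le_of_injective _ hinj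
    simp only [Fintype.card_fin] at h2
    omega
  have hmem : sSup S ∈ S := Nat.sSup_mem ⟨1, h1⟩ hbdd
  obtain ⟨p, hp⟩ := hmem
  refine ⟨sSup S, p, hp, le_csSup hbdd h1, fun p' hp' => ?_⟩
  have := le_csSup hbdd (⟨p', hp'⟩ : sSup S + 1 ∈ S)
  omega

def StepACfg (G : SimpleGraph V) : Prop :=
  ∃ x0 x1 x2 : V, G.Adj x0 x1 ∧ G.Adj x1 x2 ∧
    (∀ z, G.Adj x0 z → z = x1) ∧
    (∀ u, G.Adj x1 u → u = x0 ∨ u = x2 ∨ (∀ z, G.Adj u z → z = x1))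

lemma dichotomy (G : SimpleGraph V) (hedge : ∃ e, e ∈ G.edgeSet) :
    (∃ n, 3 ≤ n ∧ HasCycN G n) ∨ StepACfg G := by
  by_cases hcy : ∃ n, 3 ≤ n ∧ HasCycN G n
  · exact Or.inl hcy
  right
  obtain ⟨n, p, hp, hn1, hmax⟩ := exists_max_path G hedge
  set x0 := p 0 with hx0
  set x1 := p 1 with hx1
  -- x0 is a leaf
  have hA : ∀ z, G.Adj x0 z → z = x1 := by
    intro z hz
    by_contra hne
    by_cases him : ∃ i, i ≤ n ∧ z = p i
    · obtain ⟨i, hin, rfl⟩ := him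
      have hi0 : i ≠ 0 := by
        intro h; subst h; exact G.irrefl hz
      have hi1 : i ≠ 1 := by
        intro h; subst h; exact hne rfl
      refine hcy ⟨i + 1, by omega, fun t => p t, fun t ht => hp.1 t (by omega), ?_,
        fun a ha b hb hab => hp.2 a (by omega) b (by omega) hab⟩
      have he : i + 1 - 1 = i := by omega
      rw [he]
      exact G.adj_symm hz
    · push_neg at him
      refine hmax (fun t => if t = 0 then z else p (t - 1)) ⟨fun t ht => ?_, ?_⟩
      · beta_reduce
        by_cases h0 : t = 0
        · subst h0
          simp only [if_pos rfl, if_neg (by omega : (0:ℕ) + 1 ≠ 0)]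
          exact G.adj_symm hz
        · rw [if_neg h0, if_neg (by omega : t + 1 ≠ 0)]
          have he : t + 1 - 1 = (t - 1) + 1 := by omega
          rw [he]
          exact hp.1 _ (by omega)
      · intro i hi j hj hij
        beta_reduce at hij
        by_cases hi0 : i = 0 <;> by_cases hj0 : j = 0
        · omega
        · rw [if_pos hi0, if_neg hj0] at hij
          exact absurd hij.symm (fun h => him _ (by omega) h.symm)
        · rw [if_neg hi0, if_pos hj0] at hij
          exact absurd hij (fun h => him _ (by omega) h.symm)
        · rw [if_neg hi0, if_neg hj0] at hij
          have := hp.2 _ (by omega) _ (by omega) hij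
          omega
  -- designated second vertex
  set x2 : V := if 2 ≤ n then p 2 else x0 with hx2
  have hx1x2 : G.Adj x1 x2 := by
    rw [hx2]
    by_cases h2 : 2 ≤ n
    · rw [if_pos h2]
      exact hp.1 1 (by omega)
    · rw [if_neg h2]
      exact G.adj_symm (hp.1 0 (by omega))
  refine ⟨x0, x1, x2, hp.1 0 (by omega), hx1x2, hA, ?_⟩
  intro u hu
  by_cases him : ∃ i, i ≤ n ∧ u = p i
  · obtain ⟨i, hin, rfl⟩ := him
    have hi1 : i ≠ 1 := by
      intro h; subst h; exact G.irrefl hu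
    by_cases hi0 : i = 0
    · subst hi0; exact Or.inl rfl
    by_cases hi2 : i = 2
    · subst hi2
      refine Or.inr (Or.inl ?_)
      rw [hx2, if_pos (by omega)]
    · -- i ≥ 3 : cycle p 1 ... p i
      exfalso
      refine hcy ⟨i, by omega, fun t => p (1 + t), fun t ht => ?_, ?_, ?_⟩
      · beta_reduce
        have he : 1 + (t + 1) = (1 + t) + 1 := by omega
        rw [he]
        exact hp.1 _ (by omega)
      · beta_reduce
        have he : 1 + (i - 1) = i := by omega
        rw [he, Nat.add_zero]
        exact G.adj_symm hu
      · intro a ha b hb hab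
        beta_reduce at hab
        have := hp.2 _ (by omega) _ (by omega) hab
        omega
  · push_neg at him
    refine Or.inr (Or.inr ?_)
    intro z hz
    by_contra hzx1
    by_cases himz : ∃ i, i ≤ n ∧ z = p i
    · obtain ⟨i, hin, rfl⟩ := himz
      by_cases hi0 : i = 0
      · subst hi0
        have := hA u (G.adj_symm hz)
        exact (G.ne_of_adj hu).symm this |>.elim
      by_cases hi1 : i = 1
      · exact hzx1 (by rw [hi1])
      · -- i ≥ 2 : cycle p 1 ... p i u
        refine hcy ⟨i + 1, by omega,
          fun t => if t ≤ i - 1 then p (1 + t) else u, fun t ht => ?_, ?_, ?_⟩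
        · beta_reduce
          by_cases h1 : t + 1 ≤ i - 1
          · rw [if_pos (by omega), if_pos h1]
            have he : 1 + (t + 1) = (1 + t) + 1 := by omega
            rw [he]
            exact hp.1 _ (by omega)
          · -- t + 1 = i, t = i - 1
            have ht1 : t = i - 1 := by omega
            rw [if_pos (by omega), if_neg h1]
            subst ht1
            have he : 1 + (i - 1) = i := by omega
            rw [he]
            exact G.adj_symm hz
        · beta_reduce
          rw [if_neg (by omega : ¬ i + 1 - 1 ≤ i - 1), if_pos (by omega : (0:ℕ) ≤ i - 1)]
          exact G.adj_symm hu
        · intro a ha b hb hab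
          beta_reduce at hab
          by_cases ha1 : a ≤ i - 1 <;> by_cases hb1 : b ≤ i - 1
          · rw [if_pos ha1, if_pos hb1] at hab
            have := hp.2 _ (by omega) _ (by omega) hab
            omega
          · rw [if_pos ha1, if_neg hb1] at hab
            exact absurd hab.symm (him _ (by omega))
          · rw [if_neg ha1, if_pos hb1] at hab
            exact absurd hab (him _ (by omega))
          · omega
    · push_neg at himz
      -- extend the path at the x1 end : z u x1 p2 ... pn
      have hzu : z ≠ u := (G.ne_of_adj hz).symm
      refine hmax (fun t => if t = 0 then z else if t = 1 then u else p (t - 1))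
        ⟨fun t ht => ?_, ?_⟩
      · beta_reduce
        by_cases h0 : t = 0
        · subst h0
          simpa using G.adj_symm hz
        · by_cases h1 : t = 1
          · subst h1
            rw [if_neg (by omega), if_pos rfl, if_neg (by omega), if_neg (by omega)]
            exact G.adj_symm hu
          · rw [if_neg h0, if_neg h1, if_neg (by omega), if_neg (by omega)]
            have he : t + 1 - 1 = (t - 1) + 1 := by omega
            rw [he]
            exact hp.1 _ (by omega)
      · intro a ha b hb hab
        beta_reduce at hab
        by_cases ha0 : a = 0 <;> by_cases hb0 : b = 0
        · omega
        · rw [if_pos ha0, if_neg hb0] at hab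
          by_cases hb1 : b = 1
          · rw [if_pos hb1] at hab
            exact absurd hab hzu
          · rw [if_neg hb1] at hab
            exact absurd hab.symm (fun h => himz _ (by omega) h.symm)
        · rw [if_neg ha0, if_pos hb0] at hab
          by_cases ha1 : a = 1
          · rw [if_pos ha1] at hab
            exact absurd hab.symm hzu
          · rw [if_neg ha1] at hab
            exact absurd hab (fun h => himz _ (by omega) h.symm)
        · rw [if_neg ha0, if_neg hb0] at hab
          by_cases ha1 : a = 1 <;> by_cases hb1 : b = 1
          · omega
          · rw [if_pos ha1, if_neg hb1] at hab
            exact absurd hab.symm (fun h => him _ (by omega) h.symm)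
          · rw [if_neg ha1, if_pos hb1] at hab
            exact absurd hab (fun h => him _ (by omega) h.symm)
          · rw [if_neg ha1, if_neg hb1] at hab
            have := hp.2 _ (by omega) _ (by omega) hab
            omega

/-! ### Step A -/

lemma stepA (G : SimpleGraph V) (cfg : StepACfg G) :
    ∃ Z : Set V, (∃ e ∈ G.edgeSet, Meets e Z) ∧
      myChrom G ≤ myChrom (delZ G Z) + 1 ∧ myIM (delZ G Z) + 1 ≤ myIM G := by
  obtain ⟨x0, x1, x2, h01, h12, hleaf, hnb⟩ := cfg
  set Z : Set V := {x1} ∪ {v | G.Adj x1 v} with hZ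
  have hx1Z : x1 ∈ Z := Or.inl rfl
  have hx0Z : x0 ∈ Z := Or.inr (G.adj_symm h01)
  have hx2Z : x2 ∈ Z := Or.inr h12
  -- every edge meeting Z contains x1 or x2
  have hkey : ∀ e ∈ G.edgeSet, Meets e Z → (x1 ∈ e ∨ x2 ∈ e) := by
    intro e he hm
    obtain ⟨a, hae, haZ⟩ := hm
    obtain ⟨b, rfl⟩ := Sym2.mem_iff_exists.mp hae
    have hab : G.Adj a b := (SimpleGraph.mem_edgeSet G).mp he
    rcases haZ with h | h
    · left; rw [h] at hae ⊢; exact Sym2.mem_mk_left _ _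
    · rcases hnb a h with rfl | rfl | hlf
      · -- a = x0, so b = x1
        have := hleaf b hab
        subst this
        left; exact Sym2.mem_mk_right _ _
      · right; exact Sym2.mem_mk_left _ _
      · have := hlf b hab
        subst this
        left; exact Sym2.mem_mk_right _ _
  have hmeet : ∃ e ∈ G.edgeSet, Meets e Z :=
    ⟨s(x0, x1), (SimpleGraph.mem_edgeSet G).mpr h01, ⟨x1, Sym2.mem_mk_right _ _, hx1Z⟩⟩
  refine ⟨Z, hmeet, ?_⟩
  have := step_lemma G Z 1 1 (fun _ => 0)
    (fun e _ _ => by simp)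
    (by
      intro e he f hf hme hmf _ hdis
      rcases hkey e he hme with h1 | h1 <;> rcases hkey f hf hmf with h2 | h2
      · exact (hdis.2 x1 h1 x1 h2).1 rfl
      · exact (hdis.2 x1 h1 x2 h2).2 h12
      · exact (hdis.2 x2 h1 x1 h2).2 (G.adj_symm h12)
      · exact (hdis.2 x2 h1 x2 h2).1 rfl)
    {s(x0, x1)}
    (by
      intro e he
      rw [Finset.coe_singleton, Set.mem_singleton_iff] at he
      subst he
      exact (SimpleGraph.mem_edgeSet G).mpr h01)
    (by
      intro e he
      rw [Finset.mem_singleton] at he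
      subst he
      exact ⟨x1, Sym2.mem_mk_right _ _, hx1Z⟩)
    (Finset.card_singleton _)
    (by
      intro e he f hf hne
      rw [Finset.mem_singleton] at he hf
      subst he; subst hf
      exact absurd rfl hne)
    (by
      intro e he f hf hnm
      rw [Finset.mem_singleton] at he
      subst he
      constructor
      · intro hef
        exact hnm (hef ▸ ⟨x1, Sym2.mem_mk_right _ _, hx1Z⟩)
      · intro a hae b hbf
        have hbZ : b ∉ Z := fun hbZ => hnm ⟨b, hbf, hbZ⟩
        rw [Sym2.mem_iff] at hae
        have haZ : a ∈ Z := by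
          rcases hae with rfl | rfl
          · exact hx0Z
          · exact hx1Z
        refine ⟨fun h => hbZ (h ▸ haZ), ?_⟩
        intro hadj
        rcases hae with rfl | rfl
        · have := hleaf b hadj
          subst this
          exact hbZ hx1Z
        · exact hbZ (Or.inr hadj))
  exact this
/-! ### The H-graph obstruction on a minimal cycle -/

lemma rel_ll {j : ℕ} (i i' : Fin j) :
    hGraphRel j (Sum.inl i) (Sum.inl i') = ((i : ℕ) + 1 = (i' : ℕ)) := rfl
lemma rel_lr {j : ℕ} (i : Fin j) (t : Fin 4) :
    hGraphRel j (Sum.inl i) (Sum.inr t) =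
      (((i : ℕ) = 0 ∧ ((t : ℕ) = 0 ∨ (t : ℕ) = 1)) ∨
       ((i : ℕ) = j - 1 ∧ ((t : ℕ) = 2 ∨ (t : ℕ) = 3))) := rfl
lemma rel_rl {j : ℕ} (t : Fin 4) (i : Fin j) :
    hGraphRel j (Sum.inr t) (Sum.inl i) = False := rfl
lemma rel_rr {j : ℕ} (t t' : Fin 4) :
    hGraphRel j (Sum.inr t) (Sum.inr t') = False := rfl

lemma adj_iff_on_cycle {G : SimpleGraph V} {n : ℕ} {v : ℕ → V} (hcv : CycF G n v)
    (h3 : 3 ≤ n) (hmin : ∀ n', 3 ≤ n' → HasCycN G n' → n ≤ n')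
    {p q : ℕ} (hp : p < n) (hq : q < n) :
    G.Adj (v p) (v q) ↔
      (q = p + 1 ∨ p = q + 1 ∨ (p = 0 ∧ q = n - 1) ∨ (q = 0 ∧ p = n - 1)) := by
  constructor
  · exact chordless hcv h3 hmin hp hq
  · rintro (h | h | ⟨h1, h2⟩ | ⟨h1, h2⟩)
    · subst h; exact hcv.1 p hq
    · subst h; exact G.adj_symm (hcv.1 q hp)
    · subst h1; subst h2; exact G.adj_symm hcv.2.1
    · subst h1; subst h2; exact hcv.2.1

lemma haux (m : ℕ) (hm : 1 ≤ m) (G : SimpleGraph V)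
    (hns2 : ∀ j, 1 ≤ j → j ≤ 3 * m + 3 → ¬ HasInducedCopy G (hGraph j))
    {n : ℕ} {v : ℕ → V} (hcv : CycF G n v) (hl : 3 * m + 4 ≤ n)
    (hmin : ∀ n', 3 ≤ n' → HasCycN G n' → n ≤ n')
    {d : ℕ} (hd1 : 1 ≤ d) (hd2 : d ≤ 3 * m + 2) (hd3 : 2 * d ≤ n)
    {x y : V} (hx : ∀ t, t < n → x ≠ v t) (hy : ∀ t, t < n → y ≠ v t)
    (hxa : G.Adj x (v 0)) (hyb : G.Adj y (v d)) : False := by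
  have h7 : 7 ≤ n := by omega
  have hdn : d < n := by omega
  have hd1n : d + 1 < n := by omega
  have hd2n : d + 2 < n := by omega
  have hxy : x ≠ y := by
    rintro rfl
    exact ext_unique hcv (by omega) hmin hx (by omega) hdn (by omega) hxa hyb
  have hnadj : ¬ G.Adj x y := fun h =>
    pend_pair hcv h7 hmin hx hy hxy (by omega) hdn hxa hyb h
  have adjX : ∀ p, p < n → (G.Adj x (v p) ↔ p = 0) := by
    intro p hp
    constructor
    · intro h
      by_contra hp0
      exact ext_unique hcv (by omega) hmin hx (by omega) hp (Ne.symm hp0) hxa h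
    · rintro rfl; exact hxa
  have adjY : ∀ p, p < n → (G.Adj y (v p) ↔ p = d) := by
    intro p hp
    constructor
    · intro h
      by_contra hpd
      exact ext_unique hcv (by omega) hmin hy hdn hp (fun hh => hpd hh.symm) hyb h
    · rintro rfl; exact hyb
  have adjC := fun {p q} hp hq => adj_iff_on_cycle hcv (by omega) hmin (p := p) (q := q) hp hq
  -- the embedding
  set F : Fin (d + 1) ⊕ Fin 4 → V := fun A =>
    match A with
    | Sum.inl i => v (i : ℕ)
    | Sum.inr t => if (t : ℕ) = 0 then x else if (t : ℕ) = 1 then v (n - 1)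
        else if (t : ℕ) = 2 then y else v (d + 1)
    with hF
  have hFl : ∀ i : Fin (d + 1), F (Sum.inl i) = v (i : ℕ) := fun _ => rfl
  have hFr : ∀ t : Fin 4, F (Sum.inr t) = if (t : ℕ) = 0 then x
      else if (t : ℕ) = 1 then v (n - 1) else if (t : ℕ) = 2 then y else v (d + 1) :=
    fun _ => rfl
  -- injectivity
  have hinj : Function.Injective F := by
    rintro (i | t) (i' | t') h
    · rw [hFl, hFl] at h
      have := hcv.2.2 _ (by omega) _ (by omega) h
      exact congrArg Sum.inl (Fin.ext this)
    · exfalso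
      rw [hFl, hFr] at h
      rcases t' with ⟨tv, htv⟩
      interval_cases tv
      · exact hx _ (by omega) h.symm
      · have := hcv.2.2 _ (by omega) _ (by omega) h
        omega
      · exact hy _ (by omega) h.symm
      · have := hcv.2.2 _ (by omega) _ (by omega) h
        have hb := i.isLt
        omega
    · exfalso
      rw [hFl, hFr] at h
      rcases t with ⟨tv, htv⟩
      interval_cases tv
      · exact hx _ (by omega) h
      · have := hcv.2.2 _ (by omega) _ (by omega) h.symm
        omega
      · exact hy _ (by omega) h
      · have := hcv.2.2 _ (by omega) _ (by omega) h.symm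
        have hb := i'.isLt
        omega
    · rw [hFr, hFr] at h
      rcases t with ⟨tv, htv⟩
      rcases t' with ⟨tv', htv'⟩
      interval_cases tv <;> interval_cases tv' <;>
        first
          | rfl
          | (exfalso; revert h; simp only []; norm_num;
             first
               | exact fun h => hx _ (by omega) h
               | exact fun h => hy _ (by omega) h
               | exact fun h => hxy h
               | exact fun h => hxy h.symm
               | exact fun h => hx _ (by omega) h.symm
               | exact fun h => hy _ (by omega) h.symm
               | (intro h; have := hcv.2.2 _ (by omega) _ (by omega) h; omega))
  -- the adjacency transfer for mixed pairs
  have hadjH : ∀ A B, (hGraph (d + 1)).Adj A B ↔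
      A ≠ B ∧ (hGraphRel (d + 1) A B ∨ hGraphRel (d + 1) B A) := by
    intro A B
    rw [hGraph, SimpleGraph.fromRel_adj]
  have key : ∀ (i : Fin (d + 1)) (t : Fin 4),
      G.Adj (F (Sum.inl i)) (F (Sum.inr t)) ↔ (hGraph (d + 1)).Adj (Sum.inl i) (Sum.inr t) := by
    intro i t
    have hil : (i : ℕ) < n := by have := i.isLt; omega
    rw [hadjH, hFl, hFr]
    have hne : (Sum.inl i : Fin (d + 1) ⊕ Fin 4) ≠ Sum.inr t := by simp
    simp only [rel_lr, rel_rl, or_false, hne, true_and]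
    rcases t with ⟨tv, htv⟩
    interval_cases tv
    · show G.Adj (v (i : ℕ)) x ↔ ((Sum.inl i : Fin (d+1) ⊕ Fin 4) ≠ Sum.inr ⟨0, htv⟩ ∧
        (((i:ℕ) = 0 ∧ ((0:ℕ) = 0 ∨ (0:ℕ) = 1)) ∨
        ((i:ℕ) = d + 1 - 1 ∧ ((0:ℕ) = 2 ∨ (0:ℕ) = 3))))
      rw [G.adj_comm, adjX _ hil]
      have hb := i.isLt
      constructor
      · intro h
        exact ⟨by simp, by omega⟩
      · rintro ⟨-, h⟩
        omega
    · show G.Adj (v (i : ℕ)) (v (n - 1)) ↔ ((Sum.inl i : Fin (d+1) ⊕ Fin 4) ≠ Sum.inr ⟨1, htv⟩ ∧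
        (((i:ℕ) = 0 ∧ ((1:ℕ) = 0 ∨ (1:ℕ) = 1)) ∨
        ((i:ℕ) = d + 1 - 1 ∧ ((1:ℕ) = 2 ∨ (1:ℕ) = 3))))
      rw [adjC hil (by omega)]
      have hb := i.isLt
      constructor
      · intro h
        exact ⟨by simp, by omega⟩
      · rintro ⟨-, h⟩
        omega
    · show G.Adj (v (i : ℕ)) y ↔ ((Sum.inl i : Fin (d+1) ⊕ Fin 4) ≠ Sum.inr ⟨2, htv⟩ ∧
        (((i:ℕ) = 0 ∧ ((2:ℕ) = 0 ∨ (2:ℕ) = 1)) ∨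
        ((i:ℕ) = d + 1 - 1 ∧ ((2:ℕ) = 2 ∨ (2:ℕ) = 3))))
      rw [G.adj_comm, adjY _ hil]
      have hb := i.isLt
      constructor
      · intro h
        exact ⟨by simp, by omega⟩
      · rintro ⟨-, h⟩
        omega
    · show G.Adj (v (i : ℕ)) (v (d + 1)) ↔ ((Sum.inl i : Fin (d+1) ⊕ Fin 4) ≠ Sum.inr ⟨3, htv⟩ ∧
        (((i:ℕ) = 0 ∧ ((3:ℕ) = 0 ∨ (3:ℕ) = 1)) ∨
        ((i:ℕ) = d + 1 - 1 ∧ ((3:ℕ) = 2 ∨ (3:ℕ) = 3))))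
      rw [adjC hil (by omega)]
      have hb := i.isLt
      constructor
      · intro h
        exact ⟨by simp, by omega⟩
      · rintro ⟨-, h⟩
        omega
  have noinr : ∀ t t' : Fin 4, ¬ G.Adj (F (Sum.inr t)) (F (Sum.inr t')) := by
    intro t t'
    rw [hFr, hFr]
    rcases t with ⟨tv, htv⟩
    rcases t' with ⟨tv', htv'⟩
    interval_cases tv <;> interval_cases tv' <;>
      first
        | exact G.irrefl
        | exact hnadj
        | exact fun h => hnadj (G.adj_symm h)
        | exact fun h => absurd ((adjX _ (by omega)).1 h) (by omega)
        | exact fun h => absurd ((adjX _ (by omega)).1 (G.adj_symm h)) (by omega)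
        | exact fun h => absurd ((adjY _ (by omega)).1 h) (by omega)
        | exact fun h => absurd ((adjY _ (by omega)).1 (G.adj_symm h)) (by omega)
        | exact fun h => (by
            rcases chordless hcv (by omega) hmin (by omega) (by omega) h with h1|h1|h1|h1 <;>
              omega : False)
  refine hns2 (d + 1) (by omega) (by omega) ⟨⟨F, hinj⟩, ?_⟩
  intro A B
  simp only [Function.Embedding.coeFn_mk]
  rcases A with i | t <;> rcases B with i' | t'
  · -- inl inl
    rw [hadjH, hFl, hFl]
    simp only [rel_ll]
    have hb := i.isLt
    have hb' := i'.isLt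
    rw [adjC (by omega) (by omega)]
    constructor
    · rintro (h | h | ⟨h1, h2⟩ | ⟨h1, h2⟩)
      · refine ⟨by simp [Fin.ext_iff]; omega, Or.inl (by omega)⟩
      · refine ⟨by simp [Fin.ext_iff]; omega, Or.inr (by omega)⟩
      · omega
      · omega
    · rintro ⟨hne, h | h⟩
      · exact Or.inl (by omega)
      · exact Or.inr (Or.inl (by omega))
  · exact key i t'
  · rw [G.adj_comm, (hGraph (d+1)).adj_comm]
    exact key i' t
  · rw [hadjH]
    simp only [rel_rr, or_self]
    constructor
    · intro h
      exact absurd h (noinr t t')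
    · rintro ⟨-, h⟩
      exact h.elim
/-! ### Reflection of a cycle -/

lemma CycF.reflect {G : SimpleGraph V} {n : ℕ} {w : ℕ → V} (hc : CycF G n w)
    (hn : 3 ≤ n) : CycF G n (fun t => w ((n - t % n) % n)) := by
  refine ⟨?_, ?_, ?_⟩
  · intro t ht
    beta_reduce
    rw [Nat.mod_eq_of_lt (by omega : t < n), Nat.mod_eq_of_lt (by omega : t + 1 < n)]
    by_cases h0 : t = 0
    · subst h0
      rw [Nat.sub_zero, Nat.mod_self, Nat.mod_eq_of_lt (by omega : n - (0 + 1) < n)]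
      exact G.adj_symm hc.2.1
    · rw [Nat.mod_eq_of_lt (by omega : n - t < n),
        Nat.mod_eq_of_lt (by omega : n - (t + 1) < n)]
      have he : n - t = (n - (t + 1)) + 1 := by omega
      rw [he]
      exact G.adj_symm (hc.1 _ (by omega))
  · beta_reduce
    rw [Nat.mod_eq_of_lt (by omega : n - 1 < n), Nat.zero_mod, Nat.sub_zero, Nat.mod_self,
      Nat.mod_eq_of_lt (by omega : n - (n - 1) < n)]
    have he : n - (n - 1) = 0 + 1 := by omega
    rw [he]
    exact G.adj_symm (hc.1 0 (by omega))
  · intro i hi j hj hij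
    beta_reduce at hij
    have h := hc.2.2 _ (Nat.mod_lt _ (by omega)) _ (Nat.mod_lt _ (by omega)) hij
    rw [Nat.mod_eq_of_lt hi, Nat.mod_eq_of_lt hj] at h
    by_cases hi0 : i = 0 <;> by_cases hj0 : j = 0
    · omega
    · subst hi0
      rw [Nat.sub_zero, Nat.mod_self, Nat.mod_eq_of_lt (by omega)] at h
      omega
    · subst hj0
      rw [Nat.sub_zero, Nat.mod_self, Nat.mod_eq_of_lt (by omega)] at h
      omega
    · rw [Nat.mod_eq_of_lt (by omega), Nat.mod_eq_of_lt (by omega)] at h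
      omega

/-! ### Minimal cycles are long -/

lemma min_cycle_long (m : ℕ) {G : SimpleGraph V} (hns : NoShort m G)
    {n : ℕ} {w : ℕ → V} (hc : CycF G n w) (h3 : 3 ≤ n)
    (hmin : ∀ n', 3 ≤ n' → HasCycN G n' → n ≤ n') : 3 * m + 4 ≤ n := by
  by_contra hcon
  push_neg at hcon
  have hle : n ≤ 3 * m + 3 := by omega
  refine hns.1 n h3 hle ⟨⟨fun i : Fin n => w (i : ℕ), ?_⟩, ?_⟩
  · intro i j hij
    exact Fin.ext (hc.2.2 _ i.isLt _ j.isLt hij)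
  · intro i j
    show G.Adj (w (i : ℕ)) (w (j : ℕ)) ↔ _
    constructor
    · intro hadj
      rcases chordless hc h3 hmin i.isLt j.isLt hadj with h | h | ⟨h1, h2⟩ | ⟨h1, h2⟩
      · left
        rw [h, Nat.mod_eq_of_lt (by have := j.isLt; omega)]
      · right
        rw [h, Nat.mod_eq_of_lt (by have := i.isLt; omega)]
      · right
        rw [h1, h2]
        have : (n - 1 + 1) % n = 0 := by
          have he : n - 1 + 1 = n := by omega
          rw [he, Nat.mod_self]
        rw [this]
      · left
        rw [h1, h2]
        have : (n - 1 + 1) % n = 0 := by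
          have he : n - 1 + 1 = n := by omega
          rw [he, Nat.mod_self]
        rw [this]
    · rintro (h | h)
      · rcases Nat.lt_or_ge ((i : ℕ) + 1) n with hlt | hge
        · rw [Nat.mod_eq_of_lt hlt] at h
          have he : (j : ℕ) = (i : ℕ) + 1 := h
          rw [he]
          exact hc.1 _ hlt
        · have hi1 : (i : ℕ) = n - 1 := by have := i.isLt; omega
          have hj0 : (j : ℕ) = 0 := by
            rw [show (i : ℕ) + 1 = n by omega, Nat.mod_self] at h
            exact h
          rw [hi1, hj0]
          exact hc.2.1
      · rcases Nat.lt_or_ge ((j : ℕ) + 1) n with hlt | hge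
        · rw [Nat.mod_eq_of_lt hlt] at h
          have he : (i : ℕ) = (j : ℕ) + 1 := h
          rw [he]
          exact G.adj_symm (hc.1 _ hlt)
        · have hj1 : (j : ℕ) = n - 1 := by have := j.isLt; omega
          have hi0 : (i : ℕ) = 0 := by
            rw [show (j : ℕ) + 1 = n by omega, Nat.mod_self] at h
            exact h
          rw [hj1, hi0]
          exact G.adj_symm hc.2.1

/-! ### Finding a spoke-free window -/

lemma window (m : ℕ) (hm : 1 ≤ m) (G : SimpleGraph V) (hns : NoShort m G)
    {n : ℕ} {w : ℕ → V} (hc : CycF G n w) (hl : 3 * m + 4 ≤ n)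
    (hmin : ∀ n', 3 ≤ n' → HasCycN G n' → n ≤ n') :
    ∃ u : ℕ → V, CycF G n u ∧
      ∀ k, 1 ≤ k → k ≤ 3 * m + 2 → ∀ x, G.Adj x (u k) → ∃ t, t < n ∧ x = u t := by
  by_cases hsp : ∃ s, s < n ∧ ∃ x, G.Adj x (w s) ∧ ∀ t, t < n → x ≠ w t
  · obtain ⟨s, hs, x, hxadj, hxext⟩ := hsp
    set u : ℕ → V := fun t => w ((t + s) % n) with hu
    have hcu : CycF G n u := hc.rotate (by omega) s
    have hu0 : u 0 = w s := by
      show w ((0 + s) % n) = w s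
      rw [Nat.zero_add, Nat.mod_eq_of_lt hs]
    have hxextu : ∀ t, t < n → x ≠ u t := by
      intro t ht
      exact hxext _ (Nat.mod_lt _ (by omega))
    have hxadju : G.Adj x (u 0) := by rw [hu0]; exact hxadj
    refine ⟨u, hcu, ?_⟩
    intro k hk1 hk2 y hy
    by_contra hcon
    push_neg at hcon
    have hyext : ∀ t, t < n → y ≠ u t := fun t ht hh => (hcon t ht) hh
    rcases le_or_gt (2 * k) n with h2k | h2k
    · exact haux m hm G hns.2 hcu hl hmin hk1 hk2 h2k hxextu hyext hxadju hy
    · -- reflect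
      set u1 : ℕ → V := fun t => u ((n - t % n) % n) with hu1
      have hcu1 : CycF G n u1 := hcu.reflect (by omega)
      have hu10 : u1 0 = u 0 := by
        show u ((n - 0 % n) % n) = u 0
        rw [Nat.zero_mod, Nat.sub_zero, Nat.mod_self]
      have hu1k : u1 (n - k) = u k := by
        show u ((n - (n - k) % n) % n) = u k
        rw [Nat.mod_eq_of_lt (by omega : n - k < n)]
        have he : n - (n - k) = k := by omega
        rw [he, Nat.mod_eq_of_lt (by omega : k < n)]
      have hxext1 : ∀ t, t < n → x ≠ u1 t := by
        intro t ht
        exact hxextu _ (Nat.mod_lt _ (by omega))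
      have hyext1 : ∀ t, t < n → y ≠ u1 t := by
        intro t ht
        exact hyext _ (Nat.mod_lt _ (by omega))
      have hxadj1 : G.Adj x (u1 0) := by rw [hu10]; exact hxadju
      have hyadj1 : G.Adj y (u1 (n - k)) := by rw [hu1k]; exact hy
      exact haux m hm G hns.2 hcu1 hl hmin (d := n - k) (by omega) (by omega) (by omega)
        hxext1 hyext1 hxadj1 hyadj1
  · push_neg at hsp
    refine ⟨w, hc, ?_⟩
    intro k hk1 hk2 x hx
    have := hsp k (by omega) x hx
    obtain ⟨t, ht, hxt⟩ := this
    exact ⟨t, ht, hxt⟩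
/-! ### Step B -/

lemma stepB (m : ℕ) (hm : 1 ≤ m) (G : SimpleGraph V) (hns : NoShort m G)
    (hcy : ∃ k, 3 ≤ k ∧ HasCycN G k) :
    ∃ Z : Set V, (∃ e ∈ G.edgeSet, Meets e Z) ∧
      myChrom G ≤ myChrom (delZ G Z) + (m + 1) ∧ myIM (delZ G Z) + m ≤ myIM G := by
  set n := Nat.find hcy with hn
  have hPn : 3 ≤ n ∧ HasCycN G n := Nat.find_spec hcy
  have hmin : ∀ n', 3 ≤ n' → HasCycN G n' → n ≤ n' := fun n' h3 hcn =>
    Nat.find_le ⟨h3, hcn⟩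
  obtain ⟨h3, w0, hc0⟩ := hPn
  have hl : 3 * m + 4 ≤ n := min_cycle_long m hns hc0 h3 hmin
  obtain ⟨u, hcu, hwin⟩ := window m hm G hns hc0 hl hmin
  have hInt : ∀ k, 1 ≤ k → k ≤ 3 * m + 2 → ∀ z, G.Adj z (u k) →
      z = u (k - 1) ∨ z = u (k + 1) := by
    intro k hk1 hk2 z hz
    obtain ⟨t, ht, rfl⟩ := hwin k hk1 hk2 z hz
    rcases chordless hcu (by omega) hmin ht (by omega) hz with h | h | ⟨h1, h2⟩ | ⟨h1, h2⟩
    · left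
      have he' : t = k - 1 := by omega
      rw [← he']
    · right
      have he' : t = k + 1 := by omega
      rw [← he']
    · omega
    · omega
  set E : ℕ → Sym2 V := fun k => s(u k, u (k + 1)) with hE
  have hEdef : ∀ k, E k = s(u k, u (k + 1)) := fun _ => rfl
  have hEadj : ∀ k, k ≤ 3 * m + 2 → G.Adj (u k) (u (k + 1)) := fun k hk =>
    hcu.1 k (by omega)
  have hEedge : ∀ k, k ≤ 3 * m + 2 → E k ∈ G.edgeSet := fun k hk =>
    (SimpleGraph.mem_edgeSet G).mpr (hEadj k hk)
  have huinj : ∀ i, i < n → ∀ j, j < n → u i = u j → i = j := hcu.2.2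
  have hEinj : ∀ k, k ≤ 3 * m + 2 → ∀ k', k' ≤ 3 * m + 2 → E k = E k' → k = k' := by
    intro k hk k' hk' h
    rw [hEdef, hEdef, Sym2.eq_iff] at h
    rcases h with ⟨h1, h2⟩ | ⟨h1, h2⟩
    · exact huinj _ (by omega) _ (by omega) h1
    · have e1 := huinj _ (by omega) _ (by omega) h1
      have e2 := huinj _ (by omega) _ (by omega) h2
      omega
  set Z : Set V := {z | ∃ k, 1 ≤ k ∧ k ≤ 3 * m + 2 ∧ z = u k} with hZ
  have huZ : ∀ k, 1 ≤ k → k ≤ 3 * m + 2 → u k ∈ Z := fun k h1 h2 => ⟨k, h1, h2, rfl⟩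
  have hEmeets : ∀ k, k ≤ 3 * m + 2 → Meets (E k) Z := by
    intro k hk
    by_cases h0 : k = 0
    · subst h0
      exact ⟨u 1, by rw [hEdef]; exact Sym2.mem_mk_right _ _, huZ 1 (by omega) (by omega)⟩
    · exact ⟨u k, by rw [hEdef]; exact Sym2.mem_mk_left _ _, huZ k (by omega) hk⟩
  have hchar : ∀ e ∈ G.edgeSet, Meets e Z → ∃ k, k ≤ 3 * m + 2 ∧ e = E k := by
    intro e he hme
    obtain ⟨a, hae, haZ⟩ := hme
    obtain ⟨k, hk1, hk2, rfl⟩ := haZ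
    obtain ⟨b, rfl⟩ := Sym2.mem_iff_exists.mp hae
    have hab : G.Adj (u k) b := (SimpleGraph.mem_edgeSet G).mp he
    rcases hInt k hk1 hk2 b (G.adj_symm hab) with hb | hb
    · subst hb
      refine ⟨k - 1, by omega, ?_⟩
      rw [hEdef]
      have he1 : k - 1 + 1 = k := by omega
      rw [he1, Sym2.eq_swap]
    · subst hb
      exact ⟨k, by omega, (hEdef k).symm⟩
  set cz : Sym2 V → ℕ := fun e =>
    if h : ∃ k, k ≤ 3 * m + 2 ∧ e = E k then (Classical.choose h) / 3 else 0 with hcz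
  have hmeet : ∃ e ∈ G.edgeSet, Meets e Z :=
    ⟨E 1, hEedge 1 (by omega), hEmeets 1 (by omega)⟩
  refine ⟨Z, hmeet, ?_⟩
  refine step_lemma G Z (m + 1) m cz ?_ ?_
    ((Finset.range m).image (fun t => E (3 * t + 2))) ?_ ?_ ?_ ?_ ?_
  · -- cz bound
    intro e he hme
    have h := hchar e he hme
    show (if h' : ∃ k, k ≤ 3 * m + 2 ∧ e = E k then (Classical.choose h') / 3 else 0) < m + 1
    rw [dif_pos h]
    have := (Classical.choose_spec h).1
    omega
  · -- cz classes are bundles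
    intro e he f hf hme hmf hcc hdis
    have he' := hchar e he hme
    have hf' := hchar f hf hmf
    have hcce : cz e = Classical.choose he' / 3 := by
      show (if h' : _ then _ else _) = _
      rw [dif_pos he']
    have hccf : cz f = Classical.choose hf' / 3 := by
      show (if h' : _ then _ else _) = _
      rw [dif_pos hf']
    rw [hcce, hccf] at hcc
    obtain ⟨hk1b, hk1e⟩ := Classical.choose_spec he'
    obtain ⟨hk2b, hk2e⟩ := Classical.choose_spec hf'
    set k1 := Classical.choose he'
    set k2 := Classical.choose hf'
    by_cases hkk : k1 = k2
    · exact hdis.1 (by rw [hk1e, hk2e, hkk])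
    have hca : ∀ p q : ℕ, q = p + 1 → p ≤ 3 * m + 1 → e = E p → f = E q → False := by
      intro p q hpq hpb hep hfq
      refine (hdis.2 (u (p + 1)) ?_ (u (p + 1)) ?_).1 rfl
      · rw [hep, hEdef]; exact Sym2.mem_mk_right _ _
      · rw [hfq, hEdef, hpq]; exact Sym2.mem_mk_left _ _
    have hca' : ∀ p q : ℕ, q = p + 1 → p ≤ 3 * m + 1 → f = E p → e = E q → False := by
      intro p q hpq hpb hfp heq
      refine (hdis.2 (u (p + 1)) ?_ (u (p + 1)) ?_).1 rfl
      · rw [heq, hEdef, hpq]; exact Sym2.mem_mk_left _ _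
      · rw [hfp, hEdef]; exact Sym2.mem_mk_right _ _
    have hcb : ∀ p q : ℕ, q = p + 2 → q ≤ 3 * m + 2 → e = E p → f = E q → False := by
      intro p q hpq hqb hep hfq
      refine (hdis.2 (u (p + 1)) ?_ (u (p + 2)) ?_).2 (hcu.1 (p + 1) (by omega))
      · rw [hep, hEdef]; exact Sym2.mem_mk_right _ _
      · rw [hfq, hEdef, hpq]; exact Sym2.mem_mk_left _ _
    have hcb' : ∀ p q : ℕ, q = p + 2 → q ≤ 3 * m + 2 → f = E p → e = E q → False := by
      intro p q hpq hqb hfp heq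
      refine (hdis.2 (u (p + 2)) ?_ (u (p + 1)) ?_).2 (G.adj_symm (hcu.1 (p + 1) (by omega)))
      · rw [heq, hEdef, hpq]; exact Sym2.mem_mk_left _ _
      · rw [hfp, hEdef]; exact Sym2.mem_mk_right _ _
    rcases (by omega : k2 = k1 + 1 ∨ k2 = k1 + 2 ∨ k1 = k2 + 1 ∨ k1 = k2 + 2) with
      h | h | h | h
    · exact hca k1 k2 h (by omega) hk1e hk2e
    · exact hcb k1 k2 h (by omega) hk1e hk2e
    · exact hca' k2 k1 h (by omega) hk2e hk1e
    · exact hcb' k2 k1 h (by omega) hk2e hk1e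
  · -- T ⊆ edges
    intro e he
    rw [Finset.coe_image] at he
    obtain ⟨t, ht, rfl⟩ := he
    rw [Finset.mem_coe, Finset.mem_range] at ht
    exact hEedge _ (by omega)
  · -- T meets
    intro e he
    rw [Finset.mem_image] at he
    obtain ⟨t, ht, rfl⟩ := he
    rw [Finset.mem_range] at ht
    exact hEmeets _ (by omega)
  · -- T card
    rw [Finset.card_image_of_injOn, Finset.card_range]
    intro t ht t' ht' hEtt
    rw [Finset.mem_coe, Finset.mem_range] at ht ht'
    have := hEinj _ (by omega) _ (by omega) hEtt
    omega
  · -- T pairwise Dis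
    intro e he f hf hne
    rw [Finset.mem_image] at he hf
    obtain ⟨t, ht, rfl⟩ := he
    obtain ⟨t', ht', rfl⟩ := hf
    rw [Finset.mem_range] at ht ht'
    have htt' : t ≠ t' := by
      rintro rfl
      exact hne rfl
    refine ⟨hne, ?_⟩
    intro a ha b hb
    rw [hEdef, Sym2.mem_iff] at ha hb
    have hgap : 3 * t + 2 + 1 < 3 * t' + 2 ∨ 3 * t' + 2 + 1 < 3 * t + 2 := by omega
    have hstep : ∀ p q : ℕ, p < n → q < n → p + 1 < q ∨ q + 1 < p →
        p ≠ 0 → q ≠ 0 → p ≠ n - 1 → q ≠ n - 1 → u p ≠ u q ∧ ¬G.Adj (u p) (u q) := by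
      intro p q hp hq hpq hp0 hq0 hp1 hq1
      constructor
      · intro hpqe
        have := huinj _ hp _ hq hpqe
        omega
      · intro hadj
        rcases chordless hcu (by omega) hmin hp hq hadj with h | h | ⟨h1, h2⟩ | ⟨h1, h2⟩ <;>
          omega
    rcases ha with rfl | rfl <;> rcases hb with rfl | rfl <;>
      exact hstep _ _ (by omega) (by omega) (by omega) (by omega) (by omega)
        (by omega) (by omega)
  · -- T far from the rest
    intro e he f hfE hnm
    rw [Finset.mem_image] at he
    obtain ⟨t, ht, rfl⟩ := he
    rw [Finset.mem_range] at ht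
    refine ⟨?_, ?_⟩
    · rintro rfl
      exact hnm (hEmeets _ (by omega))
    · intro a ha b hb
      have hbZ : b ∉ Z := fun h => hnm ⟨b, hb, h⟩
      rw [hEdef, Sym2.mem_iff] at ha
      have hmem : ∀ p, 2 ≤ p → p ≤ 3 * m + 1 → a = u p → a ≠ b ∧ ¬G.Adj a b := by
        intro p hp2 hpb hap
        constructor
        · rintro rfl
          exact hbZ (hap ▸ huZ p (by omega) (by omega))
        · intro hadj
          subst hap
          rcases hInt p (by omega) (by omega) b (G.adj_symm hadj) with hb' | hb'
          · exact hbZ (hb' ▸ huZ (p - 1) (by omega) (by omega))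
          · exact hbZ (hb' ▸ huZ (p + 1) (by omega) (by omega))
      rcases ha with rfl | rfl
      · exact hmem _ (by omega) (by omega) rfl
      · exact hmem _ (by omega) (by omega) rfl
/-! ### Main induction -/

lemma myChrom_eq_zero {G : SimpleGraph V} (h : ¬ ∃ e, e ∈ G.edgeSet) :
    myChrom G = 0 := by
  refine Nat.le_antisymm (myChrom_le ⟨fun _ => 0, fun e he => absurd ⟨e, he⟩ h,
    fun e he => absurd ⟨e, he⟩ h⟩) (Nat.zero_le _)

lemma main_aux (m : ℕ) (hm : 1 ≤ m) :
    ∀ N : ℕ, ∀ G : SimpleGraph V, G.edgeSet.ncard ≤ N → NoShort m G →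
      m * myChrom G ≤ (m + 1) * myIM G := by
  intro N
  induction N with
  | zero =>
    intro G hcard hns
    have hempty : ¬ ∃ e, e ∈ G.edgeSet := by
      rintro ⟨e, he⟩
      have h0 : G.edgeSet.ncard = 0 := by omega
      rw [Set.ncard_eq_zero (Set.toFinite _)] at h0
      rw [h0] at he
      exact he
    rw [myChrom_eq_zero hempty]
    simp
  | succ N ih =>
    intro G hcard hns
    by_cases hedge : ∃ e, e ∈ G.edgeSet
    · rcases dichotomy G hedge with hcy | hcfg
      · obtain ⟨Z, hmeet, hchrom, him⟩ := stepB m hm G hns hcy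
        have hlt := delZ_ncard_lt hmeet
        have hIH := ih (delZ G Z) (by omega) (noShort_delZ Z hns)
        calc m * myChrom G ≤ m * (myChrom (delZ G Z) + (m + 1)) :=
              Nat.mul_le_mul_left _ hchrom
          _ = m * myChrom (delZ G Z) + m * (m + 1) := by ring
          _ ≤ (m + 1) * myIM (delZ G Z) + (m + 1) * m :=
              Nat.add_le_add hIH (le_of_eq (by ring))
          _ = (m + 1) * (myIM (delZ G Z) + m) := by ring
          _ ≤ (m + 1) * myIM G := Nat.mul_le_mul_left _ him
      · obtain ⟨Z, hmeet, hchrom, him⟩ := stepA G hcfg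
        have hlt := delZ_ncard_lt hmeet
        have hIH := ih (delZ G Z) (by omega) (noShort_delZ Z hns)
        calc m * myChrom G ≤ m * (myChrom (delZ G Z) + 1) :=
              Nat.mul_le_mul_left _ hchrom
          _ = m * myChrom (delZ G Z) + m * 1 := by ring
          _ ≤ (m + 1) * myIM (delZ G Z) + (m + 1) * 1 :=
              Nat.add_le_add hIH (by omega)
          _ = (m + 1) * (myIM (delZ G Z) + 1) := by ring
          _ ≤ (m + 1) * myIM G := Nat.mul_le_mul_left _ him
    · rw [myChrom_eq_zero hedge]
      simp

end Lozin
end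

/-- If `m ≥ 1` and `G` is a bipartite graph of maximum degree
at most `3` with no induced cycle `C_k` for `3 ≤ k ≤ 3m+3` and no induced `H_j`
for `1 ≤ j ≤ 3m+3`, then `χ(G*) ≤ ((m+1)/m)·ω(G*)`. -/
theorem lozin_class_chromNum_star_bound {V : Type} [Fintype V] (m : ℕ) (hm : 1 ≤ m)
    (G : SimpleGraph V) (hbip : G.Colorable 2) (hdeg : ∀ v : V, G.degree v ≤ 3)
    (hcyc : ∀ n, 3 ≤ n → n ≤ 3 * m + 3 → ¬ HasInducedCycle G n)
    (hH : ∀ j, 1 ≤ j → j ≤ 3 * m + 3 → ¬ HasInducedCopy G (hGraph j)) :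
    m * chromNum (starGraph G) ≤ (m + 1) * cliqueNum (starGraph G) := by
  have hns : Lozin.NoShort m G := ⟨hcyc, hH⟩
  have hmain := Lozin.main_aux m hm (G.edgeSet.ncard) G le_rfl hns
  have h1 := Lozin.chromNum_star_le G
  have h2 := Lozin.myIM_le_cliqueNum G
  calc m * chromNum (starGraph G) ≤ m * Lozin.myChrom G := Nat.mul_le_mul_left _ h1
    _ ≤ (m + 1) * Lozin.myIM G := hmain
    _ ≤ (m + 1) * cliqueNum (starGraph G) := Nat.mul_le_mul_left _ h2
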